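/- arXiv:1309.4072 — 2 statements merged into one kernel-verified Lean document; each statement's English description precedes it below -/
import Mathlib

section
/- There exist constants c > 0 and C > 0 such that for all real numbers R and R₁ with R > R₁ ≥ 3 and every axis-parallel square Q ⊂ ℝ² of side length R₁, the number of lattice points (n₁, n₂) ∈ ℤ² satisfying n₁² + n₂² = R² and (n₁, n₂) ∈ Q is at most C · exp(c · log R₁ / log log R₁). -/
open Real

section DB
open Finset

set_option maxHeartbeats 1000000 in
lemma divisor_bound {n : ℕ} (hn : 3 ≤ n) :
    (n.divisors.card : ℝ) ≤ Real.exp (50 * Real.log n / Real.log (Real.log n)) := by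
  have hn0 : n ≠ 0 := by omega
  set L : ℝ := Real.log n with hLdef
  have hL : 1 < L := by
    have h3 : (3:ℝ) ≤ n := by exact_mod_cast hn
    have : Real.exp 1 < 3 := by
      have := Real.exp_one_lt_d9; linarith
    calc (1:ℝ) = Real.log (Real.exp 1) := (Real.log_exp 1).symm
      _ < Real.log 3 := Real.log_lt_log (Real.exp_pos 1) this
      _ ≤ L := Real.log_le_log (by norm_num) h3
  have hLpos : 0 < L := by linarith
  set ℓ : ℝ := Real.log L with hldef
  have hlpos : 0 < ℓ := Real.log_pos hL
  set Q : ℝ := Real.sqrt (Real.sqrt L) with hQdef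
  have hsL : 1 ≤ Real.sqrt L := by
    rw [show (1:ℝ) = Real.sqrt 1 by simp]
    exact Real.sqrt_le_sqrt (by linarith)
  have hQ1 : 1 ≤ Q := by
    rw [hQdef, show (1:ℝ) = Real.sqrt 1 by simp]
    exact Real.sqrt_le_sqrt (by linarith)
  have hQsq : Q ^ 2 = Real.sqrt L := by
    rw [hQdef, sq]; exact Real.mul_self_sqrt (Real.sqrt_nonneg _)
  have hlQ : ℓ ≤ 4 * Q := by
    have h1 : Real.log Q ≤ Q := (Real.log_le_sub_one_of_pos (by linarith)).trans (by linarith)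
    have h2 : ℓ = 4 * Real.log Q := by
      rw [hldef, hQdef]
      rw [Real.log_sqrt (Real.sqrt_nonneg L), Real.log_sqrt (le_of_lt hLpos)]
      ring
    linarith
  set T : ℕ := ⌈Real.sqrt L⌉₊ with hTdef
  have hT2 : 2 ≤ T := by
    have : (1:ℝ) < Real.sqrt L := by
      rw [show (1:ℝ) = Real.sqrt 1 by simp]
      exact Real.sqrt_lt_sqrt (by norm_num) hL
    have h : 1 < T := Nat.lt_ceil.mpr (by push_cast; exact this)
    omega
  have hTle : (T:ℝ) ≤ 2 * Real.sqrt L := by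
    have := Nat.ceil_lt_add_one (Real.sqrt_nonneg L)
    have : (T:ℝ) < Real.sqrt L + 1 := this
    linarith
  have hTge : Real.sqrt L ≤ (T:ℝ) := Nat.le_ceil _
  -- facts about exponents
  have hexp_le : ∀ p ∈ n.primeFactors, (n.factorization p : ℝ) * Real.log 2 ≤ L := by
    intro p hp
    have hpp : p.Prime := Nat.prime_of_mem_primeFactors hp
    have hdvd : p ^ n.factorization p ∣ n := Nat.ordProj_dvd n p
    have h2p : 2 ^ n.factorization p ≤ n := by
      calc 2 ^ n.factorization p ≤ p ^ n.factorization p :=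
            Nat.pow_le_pow_left hpp.two_le _
        _ ≤ n := Nat.le_of_dvd (by omega) hdvd
    have : ((2:ℝ)) ^ (n.factorization p) ≤ (n:ℝ) := by exact_mod_cast h2p
    calc (n.factorization p : ℝ) * Real.log 2 = Real.log (2 ^ n.factorization p) := by
          rw [Real.log_pow]
      _ ≤ L := Real.log_le_log (by positivity) this
  classical
  set f : ℕ → ℕ := fun p => n.factorization p + 1 with hf
  set A := n.primeFactors.filter (fun p => p ≤ T) with hA
  set B := n.primeFactors.filter (fun p => ¬ p ≤ T) with hB
  have hsplit : n.divisors.card = (∏ p ∈ A, f p) * (∏ p ∈ B, f p) := by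
    rw [Nat.card_divisors hn0, hA, hB, Finset.prod_filter_mul_prod_filter_not]
  have hAcard : A.card ≤ T := by
    have hsub : A ⊆ Finset.Icc 2 T := by
      intro p hp
      simp only [hA, Finset.mem_filter] at hp
      exact Finset.mem_Icc.mpr ⟨(Nat.prime_of_mem_primeFactors hp.1).two_le, hp.2⟩
    calc A.card ≤ (Finset.Icc 2 T).card := Finset.card_le_card hsub
      _ = T + 1 - 2 := by rw [Nat.card_Icc]
      _ ≤ T := by omega
  have hlog2 : (0.6931471803 : ℝ) < Real.log 2 := Real.log_two_gt_d9
  have hApt : ∀ p ∈ A, ((f p : ℕ) : ℝ) ≤ 3 * L := by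
    intro p hp
    simp only [hA, Finset.mem_filter] at hp
    have h1 := hexp_le p hp.1
    have h0 : (0:ℝ) ≤ (n.factorization p : ℝ) := by positivity
    have h2 : (n.factorization p : ℝ) ≤ 1.5 * L := by nlinarith
    have : ((f p : ℕ) : ℝ) = (n.factorization p : ℝ) + 1 := by rw [hf]; push_cast; ring
    rw [this]; nlinarith
  have hAprod : ((∏ p ∈ A, f p : ℕ) : ℝ) ≤ (3*L)^T := by
    push_cast [hf]
    calc ∏ p ∈ A, ((n.factorization p : ℝ) + 1)
        ≤ ∏ p ∈ A, (3*L) := by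
          apply Finset.prod_le_prod (fun p _ => by positivity)
          intro p hp
          have := hApt p hp
          rw [hf] at this; push_cast at this; linarith
      _ = (3*L)^A.card := by rw [Finset.prod_const]
      _ ≤ (3*L)^T := pow_le_pow_right₀ (by linarith) hAcard
  set S : ℕ := ∑ p ∈ B, n.factorization p with hS
  have hBprod_nat : (∏ p ∈ B, f p) ≤ 2^S := by
    rw [hS, ← Finset.prod_pow_eq_pow_sum]
    apply Finset.prod_le_prod'
    intro p _
    exact Nat.lt_two_pow_self
  have hTS : (T+1)^S ≤ n := by
    have h1 : (T+1)^S = ∏ p ∈ B, (T+1)^(n.factorization p) :=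
      (Finset.prod_pow_eq_pow_sum _ _ _).symm
    have h2 : ∏ p ∈ B, (T+1)^(n.factorization p) ≤ ∏ p ∈ B, p^(n.factorization p) := by
      apply Finset.prod_le_prod'
      intro p hp
      apply Nat.pow_le_pow_left
      simp only [hB, Finset.mem_filter] at hp
      omega
    have hfac : ∏ p ∈ n.primeFactors, p ^ n.factorization p = n := by
      rw [← Nat.support_factorization]
      exact Nat.factorization_prod_pow_eq_self hn0
    have h3 : (∏ p ∈ B, p^(n.factorization p)) ∣ n := by
      conv_rhs => rw [← hfac]
      exact Finset.prod_dvd_prod_of_subset _ _ _ (Finset.filter_subset _ _)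
    calc (T+1)^S = ∏ p ∈ B, (T+1)^(n.factorization p) := h1
      _ ≤ ∏ p ∈ B, p^(n.factorization p) := h2
      _ ≤ n := Nat.le_of_dvd (by omega) h3
  have hSlog : (S:ℝ) * Real.log ((T:ℝ)+1) ≤ L := by
    have hc : (((T+1)^S : ℕ) : ℝ) ≤ (n:ℝ) := by exact_mod_cast hTS
    have : ((T:ℝ)+1)^S ≤ (n:ℝ) := by push_cast at hc; exact_mod_cast hc
    calc (S:ℝ) * Real.log ((T:ℝ)+1) = Real.log (((T:ℝ)+1)^S) := by
          rw [Real.log_pow]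
      _ ≤ L := Real.log_le_log (by positivity) this
  have hlogT : ℓ/2 ≤ Real.log ((T:ℝ)+1) := by
    have h1 : Real.sqrt L ≤ (T:ℝ)+1 := by linarith
    have h2 : Real.log (Real.sqrt L) = ℓ/2 := by
      rw [Real.log_sqrt hLpos.le]
    rw [← h2]
    exact Real.log_le_log (Real.sqrt_pos.mpr hLpos) h1
  have hSle : (S:ℝ) ≤ 2*L/ℓ := by
    have h0 : (0:ℝ) ≤ (S:ℝ) := by positivity
    rw [le_div_iff₀ hlpos]
    nlinarith
  have hBreal : ((∏ p ∈ B, f p : ℕ):ℝ) ≤ Real.exp (2*L/ℓ) := by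
    have h1 : ((∏ p ∈ B, f p : ℕ):ℝ) ≤ (2:ℝ)^S := by exact_mod_cast hBprod_nat
    have h2 : (2:ℝ)^S = Real.exp ((S:ℝ) * Real.log 2) := by
      rw [Real.exp_nat_mul, Real.exp_log (by norm_num : (0:ℝ) < 2)]
    have hlog2' : Real.log 2 ≤ 1 := by
      have := Real.log_two_lt_d9; linarith
    have h3 : (S:ℝ) * Real.log 2 ≤ 2*L/ℓ := by
      have h0 : (0:ℝ) ≤ (S:ℝ) := by positivity
      nlinarith [Real.log_nonneg (by norm_num : (1:ℝ) ≤ 2)]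
    calc ((∏ p ∈ B, f p : ℕ):ℝ) ≤ (2:ℝ)^S := h1
      _ = Real.exp ((S:ℝ) * Real.log 2) := h2
      _ ≤ Real.exp (2*L/ℓ) := Real.exp_le_exp.mpr h3
  have h3Lpos : (0:ℝ) < 3*L := by linarith
  have hA3L : (3*L)^T = Real.exp ((T:ℝ) * Real.log (3*L)) := by
    rw [Real.exp_nat_mul, Real.exp_log h3Lpos]
  have hL4 : L = Q^4 := by
    have h1 : Q^4 = (Q^2)^2 := by ring
    rw [h1, hQsq]
    exact (Real.sq_sqrt hLpos.le).symm
  have hlog3L : Real.log (3*L) ≤ 6*Q := by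
    rw [Real.log_mul (by norm_num) (ne_of_gt hLpos)]
    have hlog3 : Real.log 3 ≤ 2 := by
      have h := Real.exp_one_gt_d9
      have he2 : (3:ℝ) ≤ Real.exp 1 * Real.exp 1 := by nlinarith
      have : (3:ℝ) ≤ Real.exp 2 := by
        rw [show (2:ℝ) = 1+1 by norm_num, Real.exp_add]; exact he2
      calc Real.log 3 ≤ Real.log (Real.exp 2) := Real.log_le_log (by norm_num) this
        _ = 2 := Real.log_exp 2
    linarith
  have hlog3Lnn : 0 ≤ Real.log (3*L) := Real.log_nonneg (by linarith)
  have hTlog : (T:ℝ) * Real.log (3*L) ≤ 48 * L / ℓ := by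
    rw [le_div_iff₀ hlpos]
    have hT2Q : (T:ℝ) ≤ 2*Q^2 := by rw [hQsq]; linarith
    have step1 : (T:ℝ) * Real.log (3*L) ≤ (2*Q^2) * (6*Q) := by
      apply mul_le_mul hT2Q hlog3L hlog3Lnn (by positivity)
    have step2 : ((T:ℝ) * Real.log (3*L)) * ℓ ≤ (12*Q^3) * (4*Q) := by
      have hln : 0 ≤ (T:ℝ) * Real.log (3*L) := by positivity
      have : (2*Q^2) * (6*Q) = 12*Q^3 := by ring
      nlinarith [mul_le_mul (step1.trans_eq this) hlQ hlpos.le (by positivity : (0:ℝ) ≤ 12*Q^3)]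
    calc ((T:ℝ) * Real.log (3*L)) * ℓ ≤ (12*Q^3) * (4*Q) := step2
      _ = 48 * Q^4 := by ring
      _ = 48 * L := by rw [hL4]
  have hfinal : (n.divisors.card : ℝ) ≤ Real.exp ((T:ℝ) * Real.log (3*L) + 2*L/ℓ) := by
    have hc : (n.divisors.card : ℝ) = ((∏ p ∈ A, f p : ℕ):ℝ) * ((∏ p ∈ B, f p : ℕ):ℝ) := by
      rw [hsplit]; push_cast; ring
    rw [hc, Real.exp_add, ← hA3L]
    apply mul_le_mul hAprod hBreal (by positivity) (by positivity)
  calc (n.divisors.card : ℝ) ≤ Real.exp ((T:ℝ) * Real.log (3*L) + 2*L/ℓ) := hfinal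
    _ ≤ Real.exp (50 * L / ℓ) := by
        apply Real.exp_le_exp.mpr
        have : 48*L/ℓ + 2*L/ℓ = 50*L/ℓ := by ring
        linarith
    _ = Real.exp (50 * Real.log n / Real.log (Real.log n)) := by rw [hLdef, hldef]


end DB


open scoped Classical in
noncomputable def sq1 (M : ℤ) : ℤ :=
  if h : ∃ x : ℤ, M ∣ x^2 + 1 then h.choose else 0

lemma sq1_spec {M : ℤ} (h : ∃ x : ℤ, M ∣ x^2 + 1) : M ∣ (sq1 M)^2 + 1 := by
  rw [sq1]
  classical
  rw [dif_pos h]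
  exact h.choose_spec

lemma exists_sqrt_neg_one {M a₀ b₀ : ℤ} (h₀ : a₀^2 + b₀^2 = M)
    (hcop : Int.gcd a₀ b₀ = 1) : ∃ x : ℤ, M ∣ x^2 + 1 := by
  have hab : IsCoprime a₀ b₀ := Int.isCoprime_iff_gcd_eq_one.mpr hcop
  have hbM : IsCoprime b₀ M := by
    rw [Int.isCoprime_iff_gcd_eq_one]
    have he1 : (Int.gcd b₀ M : ℤ) ∣ b₀ := Int.gcd_dvd_left _ _
    have he2 : (Int.gcd b₀ M : ℤ) ∣ M := Int.gcd_dvd_right _ _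
    have he3 : (Int.gcd b₀ M : ℤ) ∣ a₀^2 := by
      have : a₀^2 = M - b₀^2 := by linarith
      rw [this]
      exact dvd_sub he2 (dvd_pow he1 (by norm_num))
    have hab2 : IsCoprime (a₀^2) b₀ := hab.pow_left
    have hunit : IsUnit (Int.gcd b₀ M : ℤ) := hab2.isUnit_of_dvd' he3 he1
    rw [Int.isUnit_iff] at hunit
    omega
  obtain ⟨u, c, huc⟩ := hbM
  exact ⟨a₀ * u, u^2 + c*(u*b₀+1), by linear_combination u^2*h₀ - (u*b₀+1)*huc⟩

/-- Key divisibility: two primitive representations with the same gcd invariant. -/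
lemma key_dvd {M x₀ a₀ b₀ a₁ b₁ : ℤ} (hM : 1 ≤ M) (hx : M ∣ x₀^2 + 1)
    (h₀ : a₀^2 + b₀^2 = M) (h₁ : a₁^2 + b₁^2 = M)
    (hc₀ : Int.gcd a₀ b₀ = 1) (hc₁ : Int.gcd a₁ b₁ = 1)
    (hg : Int.gcd (a₀ - x₀*b₀) M = Int.gcd (a₁ - x₀*b₁) M) :
    M ∣ 2*(a₀*b₁ - a₁*b₀) := by
  set v : ℤ := a₀*b₁ - a₁*b₀ with hv
  set G : ℤ := (Int.gcd (a₀ - x₀*b₀) M : ℤ) with hG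
  have hMne : M ≠ 0 := by omega
  have hGpos : 0 < G := by
    rw [hG]
    exact_mod_cast Nat.pos_of_ne_zero (fun hz => hMne ((Int.gcd_eq_zero_iff.mp hz).2))
  have hGdvdM : G ∣ M := Int.gcd_dvd_right _ _
  set H : ℤ := M / G with hH
  have hGH : G * H = M := Int.mul_ediv_cancel' hGdvdM
  -- aux: for (a,b) prim rep with gcd (a - x₀ b) M = G, we get G ∣ a - x₀ b and H ∣ a + x₀ b
  have aux : ∀ a b : ℤ, a^2 + b^2 = M → Int.gcd a b = 1 →
      (Int.gcd (a - x₀*b) M : ℤ) = G → G ∣ a - x₀*b ∧ H ∣ a + x₀*b := by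
    intro a b hab hcop hgab
    have hd1 : G ∣ a - x₀*b := by rw [← hgab]; exact Int.gcd_dvd_left _ _
    refine ⟨hd1, ?_⟩
    obtain ⟨s, hs⟩ := hd1
    have hMdvd : M ∣ (a - x₀*b) * (a + x₀*b) := by
      obtain ⟨k, hk⟩ := hx
      exact ⟨1 - k*b^2, by linear_combination hab - b^2*hk⟩
    have hsH : Int.gcd s H = 1 := by
      have h1 : Int.gcd (G*s) (G*H) = G.natAbs * Int.gcd s H := Int.gcd_mul_left G s H
      rw [← hs, hGH] at h1
      have h2 : (Int.gcd (a - x₀*b) M : ℤ) = G := hgab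
      have hGnat : G.natAbs = Int.gcd (a - x₀*b) M := by
        rw [← h2]; exact (Int.natAbs_natCast _)
      rw [← hGnat] at h1
      have hGnz : 0 < G.natAbs := by
        rw [Int.natAbs_pos]; omega
      have h1' : G.natAbs * 1 = G.natAbs * Int.gcd s H := by omega
      exact (Nat.eq_of_mul_eq_mul_left hGnz h1').symm
    have hcopHs : IsCoprime H s := by
      rw [Int.isCoprime_iff_gcd_eq_one, Int.gcd_comm]
      exact hsH
    have hdvd2 : H ∣ s * (a + x₀*b) := by
      have h3 : G * H ∣ G * (s * (a + x₀*b)) := by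
        rw [hGH, ← mul_assoc, ← hs]
        exact hMdvd
      exact (mul_dvd_mul_iff_left (by omega : G ≠ 0)).mp h3
    exact hcopHs.dvd_of_dvd_mul_left hdvd2
  obtain ⟨hd0, hd0'⟩ := aux a₀ b₀ h₀ hc₀ rfl
  obtain ⟨hd1, hd1'⟩ := aux a₁ b₁ h₁ hc₁ (by rw [hG, hg])
  have hGv : G ∣ v := by
    have : b₁*(a₀ - x₀*b₀) - b₀*(a₁ - x₀*b₁) = v := by ring
    rw [← this]
    exact dvd_sub (Dvd.dvd.mul_left hd0 _) (Dvd.dvd.mul_left hd1 _)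
  have hHv : H ∣ v := by
    have : b₁*(a₀ + x₀*b₀) - b₀*(a₁ + x₀*b₁) = v := by ring
    rw [← this]
    exact dvd_sub (Dvd.dvd.mul_left hd0' _) (Dvd.dvd.mul_left hd1' _)
  set D : ℤ := (Int.gcd G H : ℤ) with hD
  have hDG : D ∣ G := Int.gcd_dvd_left _ _
  have hDH : D ∣ H := Int.gcd_dvd_right _ _
  have hD2a : D ∣ 2*a₀ := by
    have : (a₀ - x₀*b₀) + (a₀ + x₀*b₀) = 2*a₀ := by ring
    rw [← this]
    exact dvd_add (hDG.trans hd0) (hDH.trans hd0')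
  have hD2xb : D ∣ x₀*(2*b₀) := by
    have : (a₀ + x₀*b₀) - (a₀ - x₀*b₀) = x₀*(2*b₀) := by ring
    rw [← this]
    exact dvd_sub (hDH.trans hd0') (hDG.trans hd0)
  have hDx : IsCoprime D x₀ := by
    rw [Int.isCoprime_iff_gcd_eq_one]
    have he1 : (Int.gcd D x₀ : ℤ) ∣ x₀^2 + 1 := by
      have h1 : (Int.gcd D x₀ : ℤ) ∣ M := (Int.gcd_dvd_left _ _).trans (hDG.trans hGdvdM)
      exact h1.trans hx
    have he2 : (Int.gcd D x₀ : ℤ) ∣ x₀^2 := dvd_pow (Int.gcd_dvd_right _ _) (by norm_num)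
    have he3 : (Int.gcd D x₀ : ℤ) ∣ 1 := by
      have : (x₀^2 + 1) - x₀^2 = 1 := by ring
      rw [← this]; exact dvd_sub he1 he2
    exact_mod_cast Int.eq_one_of_dvd_one (by positivity) he3
  have hD2b : D ∣ 2*b₀ := hDx.dvd_of_dvd_mul_left hD2xb
  have hD2 : D ∣ 2 := by
    have hg2 : Int.gcd (2*a₀) (2*b₀) = 2 := by
      rw [Int.gcd_mul_left]
      simp [hc₀]
    have := Int.dvd_coe_gcd hD2a hD2b
    rw [hg2] at this
    exact_mod_cast this
  -- Bezout:  D = G * α + H * β,  so  G*H ∣ v*D ∣ 2v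
  have hGHvD : G*H ∣ v*D := by
    obtain ⟨v₁, hv₁⟩ := hGv
    obtain ⟨v₂, hv₂⟩ := hHv
    have hbez : D = G * Int.gcdA G H + H * Int.gcdB G H := Int.gcd_eq_gcd_ab G H
    refine ⟨Int.gcdA G H * v₂ + Int.gcdB G H * v₁, ?_⟩
    calc v*D = v * (G * Int.gcdA G H + H * Int.gcdB G H) := by rw [← hbez]
      _ = (H*v₂) * G * Int.gcdA G H + (G*v₁) * H * Int.gcdB G H := by
          rw [← hv₁, ← hv₂]; ring
      _ = G*H*(Int.gcdA G H * v₂ + Int.gcdB G H * v₁) := by ring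
  have hvD2v : v*D ∣ 2*v := by
    obtain ⟨e, he⟩ := hD2
    exact ⟨e, by rw [mul_assoc, ← he]; ring⟩
  rw [← hGH]
  exact hGHvD.trans hvD2v

noncomputable def Phi (p : ℤ × ℤ) : ℕ × ℕ :=
  let g : ℤ := (Int.gcd p.1 p.2 : ℤ)
  let a₀ := p.1 / g
  let b₀ := p.2 / g
  let M := a₀^2 + b₀^2
  (Int.gcd p.1 p.2, Int.gcd (a₀ - sq1 M * b₀) M)

noncomputable def repsF (N : ℕ) : Finset (ℤ × ℤ) :=
  ((Finset.Icc (-(N:ℤ)) N) ×ˢ (Finset.Icc (-(N:ℤ)) N)).filter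
    (fun p => p.1^2 + p.2^2 = (N:ℤ))

lemma mem_repsF {N : ℕ} {p : ℤ × ℤ} (hp : p.1^2 + p.2^2 = (N:ℤ)) : p ∈ repsF N := by
  have h1 : p.1^2 ≤ (N:ℤ) := by nlinarith [sq_nonneg p.2]
  have h2 : p.2^2 ≤ (N:ℤ) := by nlinarith [sq_nonneg p.1]
  have hb1 : -(N:ℤ) ≤ p.1 ∧ p.1 ≤ (N:ℤ) := by constructor <;> nlinarith
  have hb2 : -(N:ℤ) ≤ p.2 ∧ p.2 ≤ (N:ℤ) := by constructor <;> nlinarith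
  simp only [repsF, Finset.mem_filter, Finset.mem_product, Finset.mem_Icc]
  exact ⟨⟨⟨hb1.1, hb1.2⟩, ⟨hb2.1, hb2.2⟩⟩, hp⟩

/-- basic data for a representation -/
lemma rep_data {N : ℕ} (hN : 1 ≤ N) {p : ℤ × ℤ} (hp : p ∈ repsF N) :
    0 < Int.gcd p.1 p.2 ∧
    (Int.gcd p.1 p.2 : ℤ) * (p.1 / (Int.gcd p.1 p.2 : ℤ)) = p.1 ∧
    (Int.gcd p.1 p.2 : ℤ) * (p.2 / (Int.gcd p.1 p.2 : ℤ)) = p.2 ∧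
    Int.gcd (p.1 / (Int.gcd p.1 p.2 : ℤ)) (p.2 / (Int.gcd p.1 p.2 : ℤ)) = 1 ∧
    ((Int.gcd p.1 p.2 : ℤ))^2 * ((p.1 / (Int.gcd p.1 p.2 : ℤ))^2 + (p.2 / (Int.gcd p.1 p.2 : ℤ))^2) = (N:ℤ) := by
  simp only [repsF, Finset.mem_filter] at hp
  have hab : p.1^2 + p.2^2 = (N:ℤ) := hp.2
  have hne : ¬(p.1 = 0 ∧ p.2 = 0) := by
    rintro ⟨h1, h2⟩
    rw [h1, h2] at hab
    simp at hab
    omega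
  have hgpos : 0 < Int.gcd p.1 p.2 := by
    rcases Nat.eq_zero_or_pos (Int.gcd p.1 p.2) with h | h
    · exact absurd (Int.gcd_eq_zero_iff.mp h) hne
    · exact h
  have hd1 : (Int.gcd p.1 p.2 : ℤ) ∣ p.1 := Int.gcd_dvd_left _ _
  have hd2 : (Int.gcd p.1 p.2 : ℤ) ∣ p.2 := Int.gcd_dvd_right _ _
  have he1 : (Int.gcd p.1 p.2 : ℤ) * (p.1 / (Int.gcd p.1 p.2 : ℤ)) = p.1 :=
    Int.mul_ediv_cancel' hd1
  have he2 : (Int.gcd p.1 p.2 : ℤ) * (p.2 / (Int.gcd p.1 p.2 : ℤ)) = p.2 :=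
    Int.mul_ediv_cancel' hd2
  refine ⟨hgpos, he1, he2, Int.gcd_div_gcd_div_gcd hgpos, ?_⟩
  linear_combination hab + (p.1 + (Int.gcd p.1 p.2 : ℤ) * (p.1 / (Int.gcd p.1 p.2 : ℤ))) * he1
    + (p.2 + (Int.gcd p.1 p.2 : ℤ) * (p.2 / (Int.gcd p.1 p.2 : ℤ))) * he2

lemma Mpos {a b : ℤ} (h : Int.gcd a b = 1) : (1:ℤ) ≤ a^2 + b^2 := by
  rcases eq_or_ne a 0 with ha | ha
  · rcases eq_or_ne b 0 with hb | hb
    · exfalso; rw [ha, hb] at h; simp [Int.gcd] at h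
    · have : 1 ≤ b^2 := by
        rcases b.lt_or_lt_of_ne hb with h' | h' <;> nlinarith
      nlinarith [sq_nonneg a]
  · have : 1 ≤ a^2 := by
      rcases a.lt_or_lt_of_ne ha with h' | h' <;> nlinarith
    nlinarith [sq_nonneg b]

lemma v_mem {M v k : ℤ} (hM1 : 1 ≤ M) (hk : 2*v = M*k) (hv2 : v^2 ≤ M^2) :
    v = 0 ∨ v = M ∨ v = -M ∨ v = M/2 ∨ v = -(M/2) := by
  have hM2 : (1:ℤ) ≤ M^2 := by nlinarith
  have he : M^2*k^2 = 4*v^2 := by linear_combination (-(M*k + 2*v)) * hk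
  have h4 : M^2*k^2 ≤ 4*M^2 := by linarith
  have hk2 : k^2 ≤ 4 := by
    by_contra hcon
    push_neg at hcon
    have h5 : 5 ≤ k^2 := hcon
    nlinarith
  have hk1 : -2 ≤ k := by nlinarith
  have hk1' : k ≤ 2 := by nlinarith
  interval_cases k <;> omega

set_option maxHeartbeats 1000000 in
lemma fiber_card_le (N : ℕ) (hN : 1 ≤ N) (y : ℕ × ℕ) :
    ((repsF N).filter (fun p => Phi p = y)).card ≤ 15 := by
  classical
  set F := (repsF N).filter (fun p => Phi p = y) with hF
  rcases Finset.eq_empty_or_nonempty F with h | ⟨q, hq⟩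
  · rw [h]; simp
  have hqr : q ∈ repsF N := (Finset.mem_filter.mp hq).1
  have hqy : Phi q = y := (Finset.mem_filter.mp hq).2
  obtain ⟨hγpos, hqe1, hqe2, hqcop, hqMN⟩ := rep_data hN hqr
  set γ : ℤ := (Int.gcd q.1 q.2 : ℤ) with hγ
  set a₀ : ℤ := q.1 / γ with ha₀
  set b₀ : ℤ := q.2 / γ with hb₀
  set M : ℤ := a₀^2 + b₀^2 with hM
  have hM1 : (1:ℤ) ≤ M := Mpos hqcop
  have hex : ∃ x : ℤ, M ∣ x^2 + 1 := exists_sqrt_neg_one rfl hqcop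
  set x₀ : ℤ := sq1 M with hx₀
  have hx : M ∣ x₀^2 + 1 := sq1_spec hex
  -- data for an arbitrary fiber element
  have hmem : ∀ p ∈ F, γ * (p.1/γ) = p.1 ∧ γ * (p.2/γ) = p.2 ∧
      Int.gcd (p.1/γ) (p.2/γ) = 1 ∧ (p.1/γ)^2 + (p.2/γ)^2 = M ∧
      Int.gcd ((p.1/γ) - x₀*(p.2/γ)) M = Int.gcd (a₀ - x₀*b₀) M := by
    intro p hp
    have hpr : p ∈ repsF N := (Finset.mem_filter.mp hp).1
    have hpy : Phi p = y := (Finset.mem_filter.mp hp).2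
    obtain ⟨hpγpos, hpe1, hpe2, hpcop, hpMN⟩ := rep_data hN hpr
    have hfst : Int.gcd p.1 p.2 = Int.gcd q.1 q.2 := by
      have h1 : (Phi p).1 = (Phi q).1 := by rw [hpy, hqy]
      simpa [Phi] using h1
    have hγp : (Int.gcd p.1 p.2 : ℤ) = γ := by rw [hfst, hγ]
    rw [hγp] at hpe1 hpe2 hpcop hpMN
    have hMp : (p.1/γ)^2 + (p.2/γ)^2 = M := by
      have hγ2 : γ^2 ≠ 0 := by
        have h0 : (0:ℤ) < γ := by rw [hγ]; exact_mod_cast hγpos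
        positivity
      apply mul_left_cancel₀ hγ2
      rw [hpMN, ← hqMN, hM]
    refine ⟨hpe1, hpe2, hpcop, hMp, ?_⟩
    have hsnd : (Phi p).2 = (Phi q).2 := by rw [hpy, hqy]
    simp only [Phi] at hsnd
    rw [hγp, hγ] at hsnd
    rw [← hγ] at hsnd
    rw [hMp] at hsnd
    exact hsnd
  -- the injection
  set ψ : ℤ × ℤ → ℤ × ℤ := fun p =>
    (a₀*(p.2/γ) - (p.1/γ)*b₀, (a₀*(p.1/γ) + b₀*(p.2/γ)).sign) with hψ
  set V : Finset (ℤ × ℤ) :=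
    ({0, M, -M, M/2, -(M/2)} : Finset ℤ) ×ˢ ({-1, 0, 1} : Finset ℤ) with hV
  have hsig : ∀ t : ℤ, t.sign = -1 ∨ t.sign = 0 ∨ t.sign = 1 := by
    intro t; rcases t with (_|n)|n <;> simp [Int.sign]
  have hVcard : V.card ≤ 15 := by
    rw [hV, Finset.card_product]
    have h1 : ({0, M, -M, M/2, -(M/2)} : Finset ℤ).card ≤ 5 := by
      apply (Finset.card_insert_le _ _).trans
      apply Nat.succ_le_succ
      apply (Finset.card_insert_le _ _).trans
      apply Nat.succ_le_succ
      apply (Finset.card_insert_le _ _).trans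
      apply Nat.succ_le_succ
      apply (Finset.card_insert_le _ _).trans
      apply Nat.succ_le_succ
      simp
    have h2 : ({-1, 0, 1} : Finset ℤ).card ≤ 3 := by
      apply (Finset.card_insert_le _ _).trans
      apply Nat.succ_le_succ
      apply (Finset.card_insert_le _ _).trans
      apply Nat.succ_le_succ
      simp
    calc _ ≤ 5 * 3 := Nat.mul_le_mul h1 h2
      _ = 15 := by norm_num
  have key : ∀ p ∈ F, (M ∣ 2*(a₀*(p.2/γ) - (p.1/γ)*b₀)) ∧
      (a₀*(p.2/γ) - (p.1/γ)*b₀)^2 + (a₀*(p.1/γ) + b₀*(p.2/γ))^2 = M^2 := by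
    intro p hp
    obtain ⟨hpe1, hpe2, hpcop, hMp, hgp⟩ := hmem p hp
    constructor
    · exact key_dvd hM1 hx rfl hMp hqcop hpcop hgp.symm
    · have hMq : a₀^2 + b₀^2 = M := rfl
      linear_combination (((p.1/γ))^2 + ((p.2/γ))^2) * hMq + M * hMp
  have hmapsV : ∀ p ∈ F, ψ p ∈ V := by
    intro p hp
    obtain ⟨hdvd, hident⟩ := key p hp
    rw [hV, hψ]
    simp only [Finset.mem_product, Finset.mem_insert, Finset.mem_singleton]
    constructor
    · obtain ⟨k, hk⟩ := hdvd
      have hv2 : (a₀*(p.2/γ) - (p.1/γ)*b₀)^2 ≤ M^2 := by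
        linarith only [hident, sq_nonneg (a₀*(p.1/γ) + b₀*(p.2/γ))]
      exact v_mem hM1 hk hv2
    · rcases hsig (a₀*(p.1/γ) + b₀*(p.2/γ)) with h | h | h <;> simp [h]
  have hinj : Set.InjOn ψ F := by
    intro p hp p' hp' heq
    obtain ⟨hpe1, hpe2, hpcop, hMp, _⟩ := hmem p hp
    obtain ⟨hpe1', hpe2', hpcop', hMp', _⟩ := hmem p' hp'
    obtain ⟨_, hident⟩ := key p hp
    obtain ⟨_, hident'⟩ := key p' hp'
    set a₁ : ℤ := p.1/γ
    set b₁ : ℤ := p.2/γ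
    set a₂ : ℤ := p'.1/γ
    set b₂ : ℤ := p'.2/γ
    have hveq : a₀*b₁ - a₁*b₀ = a₀*b₂ - a₂*b₀ := congrArg Prod.fst heq
    have hseq : (a₀*a₁ + b₀*b₁).sign = (a₀*a₂ + b₀*b₂).sign := congrArg Prod.snd heq
    set w₁ : ℤ := a₀*a₁ + b₀*b₁
    set w₂ : ℤ := a₀*a₂ + b₀*b₂
    have hw2 : (w₁ - w₂) * (w₁ + w₂) = 0 := by
      linear_combination hident - hident' -
        ((a₀*b₁ - a₁*b₀) + (a₀*b₂ - a₂*b₀)) * hveq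
    have hweq : w₁ = w₂ := by
      rcases mul_eq_zero.mp hw2 with h | h
      · linarith
      · -- w₁ = -w₂, same sign forces both zero
        have hw12 : w₁ = -w₂ := by linarith
        have : (-w₂).sign = w₂.sign := by rw [← hw12, hseq]
        rw [Int.sign_neg] at this
        have hz : w₂.sign = 0 := by omega
        have : w₂ = 0 := Int.sign_eq_zero_iff_zero.mp hz
        omega
    have hMne : M ≠ 0 := by omega
    have ha : a₁ = a₂ := by
      apply mul_left_cancel₀ hMne
      have e1 : M * a₁ = a₀*w₁ - b₀*(a₀*b₁ - a₁*b₀) := by rw [hM]; ring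
      have e2 : M * a₂ = a₀*w₂ - b₀*(a₀*b₂ - a₂*b₀) := by rw [hM]; ring
      rw [e1, e2, hweq, hveq]
    have hb : b₁ = b₂ := by
      apply mul_left_cancel₀ hMne
      have e1 : M * b₁ = b₀*w₁ + a₀*(a₀*b₁ - a₁*b₀) := by rw [hM]; ring
      have e2 : M * b₂ = b₀*w₂ + a₀*(a₀*b₂ - a₂*b₀) := by rw [hM]; ring
      rw [e1, e2, hweq, hveq]
    have hp1 : p.1 = p'.1 := by rw [← hpe1, ← hpe1', ha]
    have hp2 : p.2 = p'.2 := by rw [← hpe2, ← hpe2', hb]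
    exact Prod.ext hp1 hp2
  calc F.card ≤ V.card := Finset.card_le_card_of_injOn ψ hmapsV hinj
    _ ≤ 15 := hVcard

lemma reps_card_le (N : ℕ) (hN : 1 ≤ N) :
    (repsF N).card ≤ 15 * N.divisors.card ^ 2 := by
  classical
  have hN0 : N ≠ 0 := by omega
  have hmaps : ∀ p ∈ repsF N, Phi p ∈ N.divisors ×ˢ N.divisors := by
    intro p hp
    obtain ⟨hgpos, he1, he2, hcop, hMN⟩ := rep_data hN hp
    set g : ℤ := (Int.gcd p.1 p.2 : ℤ)
    set a₀ := p.1 / g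
    set b₀ := p.2 / g
    have hdvd1 : Int.gcd p.1 p.2 ∣ N := by
      have h1 : g ∣ (N:ℤ) := ⟨g*(a₀^2+b₀^2), by linear_combination -hMN⟩
      have h2 : (Int.gcd p.1 p.2 : ℤ) ∣ (N:ℤ) := h1
      exact_mod_cast h2
    have hMdvd : (a₀^2 + b₀^2) ∣ (N:ℤ) := ⟨g^2, by linear_combination -hMN⟩
    have hg2 : Int.gcd (a₀ - sq1 (a₀^2+b₀^2) * b₀) (a₀^2+b₀^2) ∣ N := by
      have h1 : (Int.gcd (a₀ - sq1 (a₀^2+b₀^2) * b₀) (a₀^2+b₀^2) : ℤ) ∣ (a₀^2+b₀^2) :=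
        Int.gcd_dvd_right _ _
      have h2 : (Int.gcd (a₀ - sq1 (a₀^2+b₀^2) * b₀) (a₀^2+b₀^2) : ℤ) ∣ (N:ℤ) := h1.trans hMdvd
      exact_mod_cast h2
    have hMpos : (0:ℤ) < a₀^2 + b₀^2 := by
      rcases lt_trichotomy (a₀^2+b₀^2) 0 with h | h | h
      · nlinarith [sq_nonneg a₀, sq_nonneg b₀]
      · exfalso
        have : a₀ = 0 ∧ b₀ = 0 := by constructor <;> nlinarith [sq_nonneg a₀, sq_nonneg b₀]
        rw [this.1, this.2] at hcop
        simp [Int.gcd] at hcop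
      · exact h
    have hg2pos : 0 < Int.gcd (a₀ - sq1 (a₀^2+b₀^2) * b₀) (a₀^2+b₀^2) := by
      rcases Nat.eq_zero_or_pos (Int.gcd (a₀ - sq1 (a₀^2+b₀^2) * b₀) (a₀^2+b₀^2)) with h | h
      · exfalso
        have := (Int.gcd_eq_zero_iff.mp h).2
        omega
      · exact h
    simp only [Phi, Finset.mem_product, Nat.mem_divisors]
    exact ⟨⟨hdvd1, hN0⟩, ⟨hg2, hN0⟩⟩
  have hfib : ∀ y ∈ N.divisors ×ˢ N.divisors,
      ((repsF N).filter (fun p => Phi p = y)).card ≤ 15 := fun y _ => fiber_card_le N hN y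
  calc (repsF N).card ≤ 15 * (N.divisors ×ˢ N.divisors).card :=
        Finset.card_le_mul_card_image_of_maps_to hmaps 15 hfib
    _ = 15 * N.divisors.card ^ 2 := by rw [Finset.card_product]; ring


set_option maxHeartbeats 2000000 in
lemma circum_identity (p1 p2 q1 q2 r1 r2 : ℤ)
    (h1 : q1^2 + q2^2 = p1^2 + p2^2) (h2 : r1^2 + r2^2 = p1^2 + p2^2) :
    ((q1-p1)^2+(q2-p2)^2) * ((r1-p1)^2+(r2-p2)^2) * ((r1-q1)^2+(r2-q2)^2)
      = 4*(p1^2+p2^2) * ((q1-p1)*(r2-p2) - (q2-p2)*(r1-p1))^2 := by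
  linear_combination (r2^4 + 2 * r1^2 * r2^2 + r1^4 - 2 * q2 * r2^3 - 2 * q2 * r1^2 * r2 + q2^2 * r2^2 + q2^2 * r1^2 - 2 * q1 * r1 * r2^2 - 2 * q1 * r1^3 + q1^2 * r2^2 + q1^2 * r1^2 - 2 * p2 * r2^3 - 2 * p2 * r1^2 * r2 + 2 * p2 * q2 * r2^2 - 2 * p2 * q2 * r1^2 - 2 * p2 * q2^2 * r2 + 4 * p2 * q1 * r1 * r2 - 2 * p2 * q1^2 * r2 - 1 * p2^2 * r2^2 + 3 * p2^2 * r1^2 + 2 * p2^2 * q2 * r2 + p2^2 * q2^2 - 2 * p2^2 * q1 * r1 + p2^2 * q1^2 + 4 * p2^3 * r2 - 2 * p2^3 * q2 - 2 * p2^4 + 2 * p1 * r1 * r2^2 + 2 * p1 * r1^3 + 4 * p1 * q2 * r1 * r2 - 2 * p1 * q2^2 * r1 - 2 * p1 * q1 * r2^2 + 2 * p1 * q1 * r1^2 - 2 * p1 * q1^2 * r1 - 8 * p1 * p2 * r1 * r2 + 4 * p1 * p2 * q2 * r1 + 4 * p1 * p2 * q1 * r2 - 2 * p1 * p2^2 *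 q1 - 1 * p1^2 * r2^2 - 5 * p1^2 * r1^2 - 2 * p1^2 * q2 * r2 + p1^2 * q2^2 + 2 * p1^2 * q1 * r1 + p1^2 * q1^2 + 4 * p1^2 * p2 * r2 - 2 * p1^2 * p2 * q2 - 2 * p1^3 * q1 + 2 * p1^4) * h1 + (-2 * p2 * q2 * r2^2 - 2 * p2 * q2 * r1^2 + 4 * p2 * q2^2 * r2 + 4 * p2 * q1 * q2 * r1 + 2 * p2^2 * r2^2 + 2 * p2^2 * r1^2 - 4 * p2^2 * q2^2 - 4 * p2^2 * q1 * r1 - 4 * p2^3 * r2 + 2 * p2^3 * q2 + 2 * p2^4 - 4 * p1 * q2^2 * r1 - 2 * p1 * q1 * r2^2 - 2 * p1 * q1 * r1^2 + 4 * p1 * q1 * q2 * r2 + 4 * p1 * p2 * q2 * r1 + 4 * p1 * p2 * q1 * r2 - 8 * p1 * p2 * q1 * q2 + 2 * p1 * p2^2 * q1 + 2 * p1^2 * r2^2 + 2 * p1^2 * r1^2 - 4 * p1^2 * q2 * r2 + 4 * p1^2 * q2^2 - 4 * p1^2 * p2 * r2 + 2 * p1^2 * p2 * q2 + 2 * p1^3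 * q1 - 2 * p1^4) * h2

set_option maxHeartbeats 2000000 in
lemma det_ne_zero (p1 p2 q1 q2 r1 r2 : ℤ)
    (hpq : ¬(q1 = p1 ∧ q2 = p2)) (hpr : ¬(r1 = p1 ∧ r2 = p2)) (hqr : ¬(r1 = q1 ∧ r2 = q2))
    (h1 : q1^2 + q2^2 = p1^2 + p2^2) (h2 : r1^2 + r2^2 = p1^2 + p2^2) :
    (q1-p1)*(r2-p2) - (q2-p2)*(r1-p1) ≠ 0 := by
  intro hdet
  set u1 : ℤ := q1 - p1 with hu1
  set u2 : ℤ := q2 - p2 with hu2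
  set w1 : ℤ := r1 - p1 with hw1
  set w2 : ℤ := r2 - p2 with hw2
  have E1 : 2*(p1*u1+p2*u2) + u1^2+u2^2 = 0 := by rw [hu1, hu2]; linear_combination h1
  have E2 : 2*(p1*w1+p2*w2) + w1^2+w2^2 = 0 := by rw [hw1, hw2]; linear_combination h2
  have hLag : (u1^2+u2^2)*(w1^2+w2^2) = (u1*w1+u2*w2)^2 := by
    linear_combination (u1*w2 - u2*w1) * hdet
  have hpar1 : (u1^2+u2^2)*w1 = (u1*w1+u2*w2)*u1 := by linear_combination (-u2) * hdet
  have hpar2 : (u1^2+u2^2)*w2 = (u1*w1+u2*w2)*u2 := by linear_combination u1 * hdet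
  have hE : (u1^2+u2^2)*(w1^2+w2^2) = (u1*w1+u2*w2)*(u1^2+u2^2) := by
    linear_combination (u1^2+u2^2)*E2 - 2*p1*hpar1 - 2*p2*hpar2 - (u1*w1+u2*w2)*E1
  have hune : ¬(u1 = 0 ∧ u2 = 0) := by
    rintro ⟨h1', h2'⟩
    exact hpq ⟨by omega, by omega⟩
  have hupos : 1 ≤ u1^2+u2^2 := by
    rcases eq_or_ne u1 0 with h | h
    · rcases eq_or_ne u2 0 with h' | h'
      · exact absurd ⟨h, h'⟩ hune
      · have : 1 ≤ u2^2 := by rcases u2.lt_or_lt_of_ne h' with hh | hh <;> nlinarith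
        nlinarith [sq_nonneg u1]
    · have : 1 ≤ u1^2 := by rcases u1.lt_or_lt_of_ne h with hh | hh <;> nlinarith
      nlinarith [sq_nonneg u2]
  have hcc : (u1*w1+u2*w2) * ((u1*w1+u2*w2) - (u1^2+u2^2)) = 0 := by
    linear_combination hE - hLag
  rcases mul_eq_zero.mp hcc with hc | hc
  · -- c = 0 : then w = 0, i.e. r = p
    have hw0 : (u1^2+u2^2)*(w1^2+w2^2) = 0 := by rw [hE, hc]; ring
    rcases mul_eq_zero.mp hw0 with h | h
    · omega
    · have hz1 : w1 = 0 := by nlinarith [sq_nonneg w1, sq_nonneg w2]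
      have hz2 : w2 = 0 := by nlinarith [sq_nonneg w1, sq_nonneg w2]
      exact hpr ⟨by omega, by omega⟩
  · -- c = |u|^2 : then w = u, i.e. r = q
    have hcu : u1*w1+u2*w2 = u1^2+u2^2 := by linarith
    have hww : (u1^2+u2^2)*(w1^2+w2^2) = (u1^2+u2^2)*(u1^2+u2^2) := by
      rw [hE, hcu]
    have hw2' : w1^2+w2^2 = u1^2+u2^2 :=
      mul_left_cancel₀ (by omega : u1^2+u2^2 ≠ 0) hww
    have hzero : (w1-u1)^2 + (w2-u2)^2 = 0 := by
      linear_combination hw2' - 2*hcu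
    have hz1 : w1 = u1 := by nlinarith [sq_nonneg (w1-u1), sq_nonneg (w2-u2)]
    have hz2 : w2 = u2 := by nlinarith [sq_nonneg (w1-u1), sq_nonneg (w2-u2)]
    exact hqr ⟨by omega, by omega⟩

lemma coord_sq_le {a R₁ x y : ℝ} (hx : a ≤ x) (hx' : x ≤ a + R₁) (hy : a ≤ y)
    (hy' : y ≤ a + R₁) : (x - y)^2 ≤ R₁^2 := by nlinarith

lemma caseA_main {R R₁ u1 u2 w1 w2 v1 v2 d : ℝ}
    (hR₁ : 3 ≤ R₁) (hR : 2*R₁^3 ≤ R)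
    (hu1 : u1^2 ≤ R₁^2) (hu2 : u2^2 ≤ R₁^2) (hw1 : w1^2 ≤ R₁^2) (hw2 : w2^2 ≤ R₁^2)
    (hv1 : v1^2 ≤ R₁^2) (hv2 : v2^2 ≤ R₁^2) (hd : 1 ≤ d)
    (hid : (u1^2+u2^2)*(w1^2+w2^2)*(v1^2+v2^2) = 4*R^2*d) : False := by
  have hR₁pos : (0:ℝ) < R₁ := by linarith
  have hA : u1^2+u2^2 ≤ 2*R₁^2 := by linarith
  have hB : w1^2+w2^2 ≤ 2*R₁^2 := by linarith
  have hC : v1^2+v2^2 ≤ 2*R₁^2 := by linarith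
  have hAn : 0 ≤ u1^2+u2^2 := by positivity
  have hBn : 0 ≤ w1^2+w2^2 := by positivity
  have hCn : 0 ≤ v1^2+v2^2 := by positivity
  have hprod : (u1^2+u2^2)*(w1^2+w2^2)*(v1^2+v2^2) ≤ 8*R₁^6 := by
    calc (u1^2+u2^2)*(w1^2+w2^2)*(v1^2+v2^2) ≤ (2*R₁^2)*(2*R₁^2)*(2*R₁^2) := by
          apply mul_le_mul _ hC hCn (by positivity)
          apply mul_le_mul hA hB hBn (by positivity)
      _ = 8*R₁^6 := by ring
  have hsq : (2*R₁^3)^2 ≤ R^2 := pow_le_pow_left₀ (by positivity) hR 2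
  have hRbig : 16*R₁^6 ≤ 4*R^2 := by nlinarith [hsq]
  have hd4 : 4*R^2 ≤ 4*R^2*d := by
    nlinarith [mul_nonneg (by linarith : (0:ℝ) ≤ d - 1) (sq_nonneg R)]
  linarith [pow_pos hR₁pos 6]

set_option maxHeartbeats 1000000 in
/-- Lemma 2.1: lattice points on the circle of radius `R` lying in an axis-parallel
square of side length `R₁` number at most `C · exp(c · log R₁ / log log R₁)`. -/
theorem circle_lattice_points_in_box_bound :
    ∃ c > (0 : ℝ), ∃ C > (0 : ℝ), ∀ R R₁ : ℝ, R > R₁ → R₁ ≥ 3 → ∀ a b : ℝ,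
      (({p : ℤ × ℤ | (p.1 : ℝ) ^ 2 + (p.2 : ℝ) ^ 2 = R ^ 2 ∧
          (p.1 : ℝ) ∈ Set.Icc a (a + R₁) ∧ (p.2 : ℝ) ∈ Set.Icc b (b + R₁)}).ncard : ℝ)
        ≤ C * Real.exp (c * Real.log R₁ / Real.log (Real.log R₁)) := by
  refine ⟨800, by norm_num, 15, by norm_num, ?_⟩
  intro R R₁ hRR₁ hR₁ a b
  set s := {p : ℤ × ℤ | (p.1 : ℝ) ^ 2 + (p.2 : ℝ) ^ 2 = R ^ 2 ∧
      (p.1 : ℝ) ∈ Set.Icc a (a + R₁) ∧ (p.2 : ℝ) ∈ Set.Icc b (b + R₁)} with hs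
  have hR3 : (3:ℝ) < R := lt_of_le_of_lt hR₁ hRR₁
  have hlogR₁ : 1 < Real.log R₁ := by
    have h3 : Real.exp 1 < 3 := by have := Real.exp_one_lt_d9; linarith
    calc (1:ℝ) = Real.log (Real.exp 1) := (Real.log_exp 1).symm
      _ < Real.log 3 := Real.log_lt_log (Real.exp_pos 1) h3
      _ ≤ Real.log R₁ := Real.log_le_log (by norm_num) hR₁
  have hllogpos : 0 < Real.log (Real.log R₁) := Real.log_pos hlogR₁
  have hexpal : 0 ≤ 800 * Real.log R₁ / Real.log (Real.log R₁) := by positivity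
  have hexp1 : 1 ≤ Real.exp (800 * Real.log R₁ / Real.log (Real.log R₁)) :=
    Real.one_le_exp hexpal
  rcases Set.eq_empty_or_nonempty s with hemp | ⟨e0, he0⟩
  · rw [hemp]
    simp only [Set.ncard_empty, Nat.cast_zero]
    positivity
  -- extract N
  have he0' := he0
  rw [hs, Set.mem_setOf_eq] at he0'
  obtain ⟨he0eq, _, _⟩ := he0'
  set NZ : ℤ := e0.1^2 + e0.2^2 with hNZ
  have hNZnn : 0 ≤ NZ := by positivity
  set N : ℕ := NZ.toNat with hN
  have hNZN : (N:ℤ) = NZ := Int.toNat_of_nonneg hNZnn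
  have hNR : ((N:ℕ):ℝ) = R^2 := by
    have h1 : ((NZ:ℤ):ℝ) = R^2 := by push_cast; exact_mod_cast he0eq
    rw [← h1]
    exact_mod_cast congrArg (fun z : ℤ => (z:ℝ)) hNZN
  have hN10 : 10 ≤ N := by
    have h9 : (9:ℝ) < R^2 := by nlinarith
    have : (9:ℝ) < (N:ℝ) := by rw [hNR]; exact h9
    exact_mod_cast Nat.lt_of_lt_of_le (by exact_mod_cast this : (9:ℕ) < N) le_rfl
  -- s injects into repsF N
  have hsub : s ⊆ ↑(repsF N) := by
    intro p hp
    rw [hs, Set.mem_setOf_eq] at hp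
    have hz : p.1^2 + p.2^2 = (N:ℤ) := by
      have : ((p.1^2 + p.2^2 : ℤ) : ℝ) = ((N:ℤ):ℝ) := by
        push_cast
        rw [hp.1]
        exact_mod_cast hNR.symm
      exact_mod_cast this
    exact mem_repsF hz
  have hfin : s.Finite := Set.Finite.subset (repsF N).finite_toSet hsub
  have hcard0 : s.ncard ≤ (repsF N).card := by
    rw [← Set.ncard_coe_finset]
    exact Set.ncard_le_ncard hsub (repsF N).finite_toSet
  rcases le_or_gt R (2*R₁^3) with hcaseB | hcaseA
  · -- divisor bound case
    have h1 : (s.ncard : ℝ) ≤ 15 * ((N.divisors.card : ℝ))^2 := by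
      have := reps_card_le N (by omega)
      have h2 : s.ncard ≤ 15 * N.divisors.card ^ 2 := le_trans hcard0 this
      exact_mod_cast h2
    have hd := divisor_bound (n := N) (by omega)
    have hdn : (0:ℝ) ≤ (N.divisors.card : ℝ) := by positivity
    have h2 : ((N.divisors.card : ℝ))^2 ≤
        Real.exp (100 * Real.log N / Real.log (Real.log N)) := by
      have h3 : ((N.divisors.card : ℝ))^2 ≤
          (Real.exp (50 * Real.log N / Real.log (Real.log N)))^2 := by
        exact pow_le_pow_left₀ hdn hd 2
      have h4 : (Real.exp (50 * Real.log N / Real.log (Real.log N)))^2 =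
          Real.exp (100 * Real.log N / Real.log (Real.log N)) := by
        rw [sq, ← Real.exp_add]
        congr 1
        ring
      linarith
    -- exponent comparison
    have hNlb : R₁ < (N:ℝ) := by
      rw [hNR]; nlinarith
    have hlogN1 : 1 < Real.log N := by
      calc (1:ℝ) < Real.log R₁ := hlogR₁
        _ ≤ Real.log N := Real.log_le_log (by linarith) (by linarith)
    have hloglogN : Real.log (Real.log R₁) ≤ Real.log (Real.log N) := by
      apply Real.log_le_log (by linarith)
      exact Real.log_le_log (by linarith) (by linarith)
    have hlogNub : Real.log N ≤ 8 * Real.log R₁ := by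
      have hN4 : (N:ℝ) ≤ 4*R₁^6 := by
        rw [hNR]; nlinarith
      have hlog4 : Real.log 4 ≤ 2 := by
        have h := Real.exp_one_gt_d9
        have he2 : (4:ℝ) ≤ Real.exp 1 * Real.exp 1 := by nlinarith
        have h4 : (4:ℝ) ≤ Real.exp 2 := by
          rw [show (2:ℝ) = 1+1 by norm_num, Real.exp_add]; exact he2
        calc Real.log 4 ≤ Real.log (Real.exp 2) := Real.log_le_log (by norm_num) h4
          _ = 2 := Real.log_exp 2
      calc Real.log N ≤ Real.log (4*R₁^6) := Real.log_le_log (by positivity) hN4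
        _ = Real.log 4 + 6 * Real.log R₁ := by
            rw [Real.log_mul (by norm_num) (by positivity), Real.log_pow]
            push_cast; ring
        _ ≤ 2 + 6 * Real.log R₁ := by linarith
        _ ≤ 8 * Real.log R₁ := by linarith
    have hexpcmp : 100 * Real.log N / Real.log (Real.log N) ≤
        800 * Real.log R₁ / Real.log (Real.log R₁) := by
      have hllogNpos : 0 < Real.log (Real.log N) := lt_of_lt_of_le hllogpos hloglogN
      rw [div_le_div_iff₀ hllogNpos hllogpos]
      have e1 : 100 * Real.log N * Real.log (Real.log R₁) ≤
          100 * (8 * Real.log R₁) * Real.log (Real.log R₁) := by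
        have := hllogpos
        nlinarith
      have e2 : 100 * (8 * Real.log R₁) * Real.log (Real.log R₁) ≤
          800 * Real.log R₁ * Real.log (Real.log N) := by
        have hlogR₁pos : (0:ℝ) < Real.log R₁ := by linarith
        nlinarith
      linarith
    calc (s.ncard : ℝ) ≤ 15 * ((N.divisors.card : ℝ))^2 := h1
      _ ≤ 15 * Real.exp (100 * Real.log N / Real.log (Real.log N)) := by linarith
      _ ≤ 15 * Real.exp (800 * Real.log R₁ / Real.log (Real.log R₁)) := by
          have := Real.exp_le_exp.mpr hexpcmp
          linarith
  · -- geometric case : at most 2 points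
    have hA : s.ncard ≤ 2 := by
      by_contra hgt
      push_neg at hgt
      obtain ⟨p, hp, q, hq, r, hr, hpq, hpr, hqr⟩ := (Set.two_lt_ncard hfin).mp hgt
      rw [hs, Set.mem_setOf_eq] at hp hq hr
      obtain ⟨hpe, hpx, hpy⟩ := hp
      obtain ⟨hqe, hqx, hqy⟩ := hq
      obtain ⟨hre, hrx, hry⟩ := hr
      have hnq : q.1^2 + q.2^2 = p.1^2 + p.2^2 := by
        have : ((q.1^2 + q.2^2 : ℤ):ℝ) = ((p.1^2 + p.2^2 : ℤ):ℝ) := by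
          push_cast; rw [hqe, hpe]
        exact_mod_cast this
      have hnr : r.1^2 + r.2^2 = p.1^2 + p.2^2 := by
        have : ((r.1^2 + r.2^2 : ℤ):ℝ) = ((p.1^2 + p.2^2 : ℤ):ℝ) := by
          push_cast; rw [hre, hpe]
        exact_mod_cast this
      have hdet : (q.1-p.1)*(r.2-p.2) - (q.2-p.2)*(r.1-p.1) ≠ 0 := by
        apply det_ne_zero <;> try assumption
        · rintro ⟨h1, h2⟩; exact hpq (Prod.ext h1.symm h2.symm)
        · rintro ⟨h1, h2⟩; exact hpr (Prod.ext h1.symm h2.symm)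
        · rintro ⟨h1, h2⟩; exact hqr (Prod.ext h1.symm h2.symm)
      have hdet1 : 1 ≤ ((q.1-p.1)*(r.2-p.2) - (q.2-p.2)*(r.1-p.1))^2 := by
        rcases Int.lt_or_lt_of_ne hdet with h | h <;> nlinarith
      have hdet1R : (1:ℝ) ≤ (((q.1:ℝ)-(p.1:ℝ))*((r.2:ℝ)-(p.2:ℝ)) -
          ((q.2:ℝ)-(p.2:ℝ))*((r.1:ℝ)-(p.1:ℝ)))^2 := by exact_mod_cast hdet1
      have hid := circum_identity p.1 p.2 q.1 q.2 r.1 r.2 hnq hnr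
      have hidR0 := congrArg (fun z : ℤ => (z:ℝ)) hid
      push_cast at hidR0
      have hidR : (((q.1:ℝ)-(p.1:ℝ))^2+((q.2:ℝ)-(p.2:ℝ))^2) *
          (((r.1:ℝ)-(p.1:ℝ))^2+((r.2:ℝ)-(p.2:ℝ))^2) *
          (((r.1:ℝ)-(q.1:ℝ))^2+((r.2:ℝ)-(q.2:ℝ))^2)
          = 4*R^2 * (((q.1:ℝ)-(p.1:ℝ))*((r.2:ℝ)-(p.2:ℝ)) -
              ((q.2:ℝ)-(p.2:ℝ))*((r.1:ℝ)-(p.1:ℝ)))^2 := by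
        linear_combination hidR0 + 4*((((q.1:ℝ)-(p.1:ℝ))*((r.2:ℝ)-(p.2:ℝ)) -
              ((q.2:ℝ)-(p.2:ℝ))*((r.1:ℝ)-(p.1:ℝ)))^2) * hpe
      simp only [Set.mem_Icc] at hpx hpy hqx hqy hrx hry
      exact caseA_main hR₁ hcaseA.le
        (coord_sq_le hqx.1 hqx.2 hpx.1 hpx.2) (coord_sq_le hqy.1 hqy.2 hpy.1 hpy.2)
        (coord_sq_le hrx.1 hrx.2 hpx.1 hpx.2) (coord_sq_le hry.1 hry.2 hpy.1 hpy.2)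
        (coord_sq_le hrx.1 hrx.2 hqx.1 hqx.2) (coord_sq_le hry.1 hry.2 hqy.1 hqy.2)
        hdet1R hidR
    calc (s.ncard : ℝ) ≤ 2 := by exact_mod_cast hA
      _ ≤ 15 * Real.exp (800 * Real.log R₁ / Real.log (Real.log R₁)) := by linarith
end

section
/- Let C₁ > 0 and let (z_n)_{n≥1} be a sequence of real numbers satisfying |z_n − π(n − 1/4)| ≤ C₁/n for all n ≥ 1. Then for every ε > 0 there exists a constant C_ε > 0 (depending only on ε and C₁) such that for every interval I ⊂ ℝ of length L ≥ 2 and every ℓ ∈ ℝ, the number of pairs (n, n') of positive integers with z_n ∈ I, z_{n'} ∈ I and |z_n² + z_{n'}² − ℓ| < 1 is at most C_ε · L^ε. -/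
open Real

set_option maxHeartbeats 2000000

lemma gcd_mul_dvd {x y k : ℕ} (h : k ∣ x * y) : k ∣ Nat.gcd x k * Nat.gcd y k := by
  have h1 : Nat.gcd x k * Nat.gcd y k
      = Nat.gcd (Nat.gcd (x*y) (k*y)) (Nat.gcd (x*k) (k*k)) := by
    rw [← Nat.gcd_mul_left, ← Nat.gcd_mul_right, ← Nat.gcd_mul_right]
  rw [h1]
  exact Nat.dvd_gcd (Nat.dvd_gcd h ⟨y, by ring⟩) (Nat.dvd_gcd ⟨x, by ring⟩ ⟨k, by ring⟩)

lemma sqrt_one_card (k : ℕ) (hk : 2 ≤ k) :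
    haveI : NeZero k := ⟨by omega⟩
    (Finset.univ.filter (fun u : ZMod k => u^2 = 1)).card ≤ 2 * (k.divisors.card)^2 := by
  haveI : NeZero k := ⟨by omega⟩
  haveI : Fact (1 < k) := ⟨by omega⟩
  classical
  set t : Finset ((ℕ × ℕ) × Bool) := (k.divisors ×ˢ k.divisors) ×ˢ Finset.univ with ht
  set f : ZMod k → (ℕ × ℕ) × Bool :=
    fun u => ((Nat.gcd (u.val - 1) k, Nat.gcd (u.val + 1) k), decide (2 * u.val < k)) with hf
  have key : ∀ u : ZMod k, u ^ 2 = 1 →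
      1 ≤ u.val ∧ k ≤ 2 * Nat.lcm (Nat.gcd (u.val - 1) k) (Nat.gcd (u.val + 1) k) := by
    intro u hu
    have hval : u.val < k := ZMod.val_lt u
    have hcast : ((u.val : ℕ) : ZMod k) = u := ZMod.natCast_rightInverse u
    have hv1 : 1 ≤ u.val := by
      by_contra h
      have hv0 : u.val = 0 := by omega
      have hu0 : u = 0 := by rw [← hcast, hv0]; simp
      rw [hu0] at hu
      simp at hu
    refine ⟨hv1, ?_⟩
    set v := u.val with hvdef
    have hdvd : k ∣ (v - 1) * (v + 1) := by
      have h2 : ((v ^ 2 : ℕ) : ZMod k) = ((1 : ℕ) : ZMod k) := by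
        push_cast
        rw [hcast, hu]
      have h3 : v ^ 2 ≡ 1 [MOD k] := (ZMod.natCast_eq_natCast_iff _ _ _).mp h2
      have h4 : k ∣ v ^ 2 - 1 := (Nat.modEq_iff_dvd' (Nat.one_le_pow 2 v (by omega))).mp h3.symm
      have h5 : (v - 1) * (v + 1) = v ^ 2 - 1 := by
        obtain ⟨w, hw⟩ := Nat.exists_eq_add_of_le hv1
        have e1 : (1 + w) ^ 2 = w * w + 2 * w + 1 := by ring
        have e2 : w * (1 + w + 1) = w * w + 2 * w := by ring
        have e3 : 1 + w - 1 = w := by omega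
        rw [hw, e3, e2, e1]
        omega
      rw [h5]; exact h4
    set a := Nat.gcd (v - 1) k
    set b := Nat.gcd (v + 1) k
    have hab : k ∣ a * b := gcd_mul_dvd hdvd
    have hga : Nat.gcd a b ∣ 2 := by
      have h1 : Nat.gcd a b ∣ v - 1 := (Nat.gcd_dvd_left _ _).trans (Nat.gcd_dvd_left _ _)
      have h2 : Nat.gcd a b ∣ v + 1 := (Nat.gcd_dvd_right _ _).trans (Nat.gcd_dvd_left _ _)
      have h3 := Nat.dvd_sub h2 h1
      have he : v + 1 - (v - 1) = 2 := by omega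
      rwa [he] at h3
    have hlcm : Nat.gcd a b * Nat.lcm a b = a * b := Nat.gcd_mul_lcm a b
    have hb0 : 0 < b := Nat.pos_of_ne_zero (fun h => by
      have := Nat.eq_zero_of_gcd_eq_zero_right h; omega)
    have ha0 : 0 < a := Nat.pos_of_ne_zero (fun h => by
      have := Nat.eq_zero_of_gcd_eq_zero_right h; omega)
    have hkab : k ≤ a * b := Nat.le_of_dvd (by positivity) hab
    have hg2 : Nat.gcd a b ≤ 2 := Nat.le_of_dvd (by norm_num) hga
    nlinarith [Nat.lcm_pos ha0 hb0]
  refine le_trans (Finset.card_le_mul_card_image_of_maps_to (f := f) (t := t) ?_ 1 ?_) ?_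
  · intro u hu
    simp only [Finset.mem_filter] at hu
    simp only [ht, Finset.mem_product, Nat.mem_divisors, Finset.mem_univ, and_true]
    exact ⟨⟨Nat.gcd_dvd_right _ _, by omega⟩, Nat.gcd_dvd_right _ _, by omega⟩
  · intro p _
    apply Finset.card_le_one.mpr
    intro u hu u' hu'
    simp only [Finset.mem_filter, Finset.mem_univ, true_and] at hu hu'
    obtain ⟨hu1, hfu⟩ := hu
    obtain ⟨hu'1, hfu'⟩ := hu'
    have h1 := key u hu1
    have h2 := key u' hu'1
    have hff : f u = f u' := hfu.trans hfu'.symm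
    simp only [hf, Prod.mk.injEq, decide_eq_decide] at hff
    obtain ⟨⟨hga, hgb⟩, hside⟩ := hff
    set v := u.val with hv
    set v' := u'.val with hv'
    have hvk : v < k := ZMod.val_lt u
    have hv'k : v' < k := ZMod.val_lt u'
    have hdvd : ∀ w w' : ℕ, w ≤ w' → Nat.gcd (w - 1) k = Nat.gcd (w' - 1) k →
        Nat.gcd (w + 1) k = Nat.gcd (w' + 1) k → 1 ≤ w →
        Nat.lcm (Nat.gcd (w - 1) k) (Nat.gcd (w + 1) k) ∣ w' - w := by
      intro w w' hle hg1 hg2 hw1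
      apply Nat.lcm_dvd
      · have d1 : Nat.gcd (w - 1) k ∣ w - 1 := Nat.gcd_dvd_left _ _
        have d2 : Nat.gcd (w - 1) k ∣ w' - 1 := hg1 ▸ Nat.gcd_dvd_left (w' - 1) k
        have h3 := Nat.dvd_sub d2 d1
        have he : w' - 1 - (w - 1) = w' - w := by omega
        rwa [he] at h3
      · have d1 : Nat.gcd (w + 1) k ∣ w + 1 := Nat.gcd_dvd_left _ _
        have d2 : Nat.gcd (w + 1) k ∣ w' + 1 := hg2 ▸ Nat.gcd_dvd_left (w' + 1) k
        have h3 := Nat.dvd_sub d2 d1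
        have he : w' + 1 - (w + 1) = w' - w := by omega
        rwa [he] at h3
    have hveq : v = v' := by
      rcases le_total v v' with hle | hle
      · have hd := hdvd v v' hle hga hgb h1.1
        have hlt : v' - v < Nat.lcm (Nat.gcd (v - 1) k) (Nat.gcd (v + 1) k) := by
          have hk2 := h1.2
          rcases Nat.lt_or_ge (2 * v) k with hs | hs
          · have hs' : 2 * v' < k := hside.mp hs
            omega
          · have hs' : ¬ (2 * v' < k) := fun h => by
              have := hside.mpr h; omega
            omega
        have h0 : v' - v = 0 := Nat.eq_zero_of_dvd_of_lt hd hlt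
        omega
      · have hd := hdvd v' v hle hga.symm hgb.symm h2.1
        have hlt : v - v' < Nat.lcm (Nat.gcd (v' - 1) k) (Nat.gcd (v' + 1) k) := by
          have hk2 := h2.2
          rcases Nat.lt_or_ge (2 * v) k with hs | hs
          · have hs' : 2 * v' < k := hside.mp hs
            omega
          · have hs' : ¬ (2 * v' < k) := fun h => by
              have := hside.mpr h; omega
            omega
        have h0 : v - v' = 0 := Nat.eq_zero_of_dvd_of_lt hd hlt
        omega
    have hfin : ((v : ℕ) : ZMod k) = ((v' : ℕ) : ZMod k) := by rw [hveq]
    rwa [hv, hv', ZMod.natCast_rightInverse u, ZMod.natCast_rightInverse u'] at hfin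
  · rw [one_mul]
    have hc : t.card = 2 * k.divisors.card ^ 2 := by
      simp [ht, Finset.card_product, Fintype.card_bool]
      ring
    omega

lemma sqrt_neg_one_card (k : ℕ) (hk : 2 ≤ k) :
    haveI : NeZero k := ⟨by omega⟩
    (Finset.univ.filter (fun s : ZMod k => s^2 = -1)).card ≤ 2 * (k.divisors.card)^2 := by
  haveI : NeZero k := ⟨by omega⟩
  classical
  rcases Finset.eq_empty_or_nonempty
      (Finset.univ.filter (fun s : ZMod k => s^2 = -1)) with he | ⟨s₀, hs₀⟩
  · rw [he]; simp
  · simp only [Finset.mem_filter, Finset.mem_univ, true_and] at hs₀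
    refine le_trans (Finset.card_le_card_of_injOn (fun s => s * s₀)
      (fun s hs => ?_) (fun s hs s' hs' h => ?_)) (sqrt_one_card k hk)
    · simp only [Finset.coe_filter, Finset.mem_filter, Finset.mem_univ, true_and, Set.mem_setOf_eq] at hs ⊢
      have : (s * s₀)^2 = s^2 * s₀^2 := by ring
      rw [this, hs, hs₀]
      ring
    · have h' : s * s₀ = s' * s₀ := h
      have h2 : s * s₀ * (-s₀) = s' * s₀ * (-s₀) := by rw [h']
      have h3 : s₀ * (-s₀) = 1 := by
        have : s₀ * (-s₀) = -(s₀^2) := by ring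
        rw [this, hs₀]; ring
      calc s = s * (s₀ * (-s₀)) := by rw [h3]; ring
      _ = s' * (s₀ * (-s₀)) := by rw [← mul_assoc, ← mul_assoc]; exact h2
      _ = s' := by rw [h3]; ring

-- key injectivity for primitive representations
lemma prim_inj (k x y x' y' : ℕ) (hk : 2 ≤ k)
    (hx : 1 ≤ x) (hy : 1 ≤ y) (hx' : 1 ≤ x') (hy' : 1 ≤ y')
    (hc : Nat.Coprime x y) (hc' : Nat.Coprime x' y')
    (hm : x^2 + y^2 = k) (hm' : x'^2 + y'^2 = k)
    (heq : (x : ZMod k) * (y : ZMod k)⁻¹ = (x' : ZMod k) * (y' : ZMod k)⁻¹) :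
    x = x' ∧ y = y' := by
  haveI : NeZero k := ⟨by omega⟩
  have coprime_aux : ∀ a b : ℕ, Nat.Coprime a b → a^2 + b^2 = k → Nat.Coprime b k := by
    intro a b hab hk2
    have h1 : Nat.gcd b k ∣ a^2 := by
      have d1 : Nat.gcd b k ∣ k := Nat.gcd_dvd_right _ _
      have d2 : Nat.gcd b k ∣ b^2 := (Nat.gcd_dvd_left _ _).trans (dvd_pow_self b (by norm_num))
      have h := Nat.dvd_sub d1 d2
      have he : k - b^2 = a^2 := by omega
      rwa [he] at h
    have h2 : Nat.Coprime (a^2) b := hab.pow_left 2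
    have h3 : Nat.gcd b k ∣ Nat.gcd (a^2) b := Nat.dvd_gcd h1 (Nat.gcd_dvd_left _ _)
    exact Nat.eq_one_of_dvd_one (h2 ▸ h3)
  have hyk : Nat.Coprime y k := coprime_aux x y hc hm
  have hy'k : Nat.Coprime y' k := coprime_aux x' y' hc' hm'
  have huy : IsUnit ((y : ZMod k)) := (ZMod.isUnit_iff_coprime y k).mpr hyk
  have huy' : IsUnit ((y' : ZMod k)) := (ZMod.isUnit_iff_coprime y' k).mpr hy'k
  have hiy := ZMod.mul_inv_of_unit _ huy
  have hiy' := ZMod.mul_inv_of_unit _ huy'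
  have hcross : ((x * y' : ℕ) : ZMod k) = ((x' * y : ℕ) : ZMod k) := by
    push_cast
    calc (x : ZMod k) * (y' : ZMod k)
        = ((x : ZMod k) * (y : ZMod k)⁻¹) * ((y : ZMod k) * (y' : ZMod k)) := by
          rw [show (x : ZMod k) * (y : ZMod k)⁻¹ * ((y : ZMod k) * (y' : ZMod k))
              = (x : ZMod k) * (y' : ZMod k) * ((y : ZMod k) * (y : ZMod k)⁻¹) by ring,
            hiy, mul_one]
      _ = ((x' : ZMod k) * (y' : ZMod k)⁻¹) * ((y : ZMod k) * (y' : ZMod k)) := by rw [heq]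
      _ = (x' : ZMod k) * (y : ZMod k) := by
          rw [show (x' : ZMod k) * (y' : ZMod k)⁻¹ * ((y : ZMod k) * (y' : ZMod k))
              = (x' : ZMod k) * (y : ZMod k) * ((y' : ZMod k) * (y' : ZMod k)⁻¹) by ring,
            hiy', mul_one]
  have hmod : (x * y') ≡ (x' * y) [MOD k] := (ZMod.natCast_eq_natCast_iff _ _ _).mp hcross
  have hdvd : (k : ℤ) ∣ (x' * y : ℤ) - (x * y' : ℤ) := by
    have := hmod.dvd
    push_cast at this ⊢
    exact this
  -- the magic identity
  have hid : ((x' : ℤ) * y - x * y')^2 + ((x:ℤ) * x' + y * y')^2 = (k:ℤ)^2 := by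
    have h1 : ((x:ℤ)^2 + y^2) = (k:ℤ) := by exact_mod_cast hm
    have h2 : ((x':ℤ)^2 + y'^2) = (k:ℤ) := by exact_mod_cast hm'
    calc ((x' : ℤ) * y - x * y')^2 + ((x:ℤ) * x' + y * y')^2
        = ((x:ℤ)^2 + y^2) * ((x':ℤ)^2 + y'^2) := by ring
      _ = (k:ℤ)^2 := by rw [h1, h2]; ring
  have hA : (2 : ℤ) ≤ (x:ℤ) * x' + y * y' := by
    have : (1:ℤ) ≤ (x:ℤ) * x' := by exact_mod_cast Nat.one_le_iff_ne_zero.mpr (by positivity)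
    have : (1:ℤ) ≤ (y:ℤ) * y' := by exact_mod_cast Nat.one_le_iff_ne_zero.mpr (by positivity)
    nlinarith [Nat.one_le_iff_ne_zero.mpr (show x * x' ≠ 0 by positivity),
      Nat.one_le_iff_ne_zero.mpr (show y * y' ≠ 0 by positivity)]
  have hB : ((x' : ℤ) * y - x * y') = 0 := by
    apply Int.eq_zero_of_abs_lt_dvd hdvd
    have hk0 : (0:ℤ) < (k:ℤ) := by exact_mod_cast (by omega : 0 < k)
    have habs : ((x' : ℤ) * y - x * y')^2 < (k:ℤ)^2 := by nlinarith
    exact abs_lt_of_sq_lt_sq habs (le_of_lt hk0)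
  have hcross2 : x' * y = x * y' := by
    have : ((x' * y : ℕ) : ℤ) = ((x * y' : ℕ) : ℤ) := by push_cast; linarith [hB]
    exact_mod_cast this
  have hyy : y = y' := by
    have d1 : y ∣ x * y' := ⟨x', by linarith [hcross2]⟩
    have d2 : y ∣ y' := (hc.symm).dvd_of_dvd_mul_left d1
    have d3 : y' ∣ x' * y := ⟨x, by linarith [hcross2]⟩
    have d4 : y' ∣ y := (hc'.symm).dvd_of_dvd_mul_left d3
    exact Nat.dvd_antisymm d2 d4
  have hxx : x = x' := by
    have : x * y' = x' * y' := by rw [← hcross2, hyy]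
    exact Nat.eq_of_mul_eq_mul_right (by omega) this
  exact ⟨hxx, hyy⟩

lemma coprime_circle {a b k : ℕ} (hab : Nat.Coprime a b) (h : a^2 + b^2 = k) :
    Nat.Coprime b k := by
  have h1 : Nat.gcd b k ∣ a^2 := by
    have d1 : Nat.gcd b k ∣ k := Nat.gcd_dvd_right _ _
    have d2 : Nat.gcd b k ∣ b^2 := (Nat.gcd_dvd_left _ _).trans (dvd_pow_self b two_ne_zero)
    have hd := Nat.dvd_sub d1 d2
    have he : k - b^2 = a^2 := by omega
    rwa [he] at hd
  have h2 : Nat.Coprime (a^2) b := hab.pow_left 2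
  have h3 : Nat.gcd b k ∣ Nat.gcd (a^2) b := Nat.dvd_gcd h1 (Nat.gcd_dvd_left _ _)
  exact Nat.eq_one_of_dvd_one (h2 ▸ h3)

lemma rep_bound (m : ℕ) (hm : 1 ≤ m) :
    (((Finset.range (m+1)) ×ˢ (Finset.range (m+1))).filter
      (fun p : ℕ × ℕ => 1 ≤ p.1 ∧ 1 ≤ p.2 ∧ p.1^2 + p.2^2 = m)).card
      ≤ 2 * (m.divisors.card)^3 := by
  classical
  set R := (((Finset.range (m+1)) ×ˢ (Finset.range (m+1))).filter
      (fun p : ℕ × ℕ => 1 ≤ p.1 ∧ 1 ≤ p.2 ∧ p.1^2 + p.2^2 = m)) with hR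
  have hmem : ∀ p : ℕ × ℕ, p ∈ R → 1 ≤ p.1 ∧ 1 ≤ p.2 ∧ p.1^2 + p.2^2 = m := by
    intro p hp
    simp only [hR, Finset.mem_filter] at hp
    exact hp.2
  have key := Finset.card_le_mul_card_image_of_maps_to
    (f := fun p : ℕ × ℕ => Nat.gcd p.1 p.2) (s := R) (t := m.divisors) ?_ (2 * (m.divisors.card)^2) ?_
  · calc R.card ≤ 2 * m.divisors.card ^ 2 * m.divisors.card := key
      _ = 2 * m.divisors.card ^ 3 := by ring
  · intro p hp
    obtain ⟨h1, h2, h3⟩ := hmem p hp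
    rw [Nat.mem_divisors]
    constructor
    · have d1 : Nat.gcd p.1 p.2 ∣ p.1^2 := (Nat.gcd_dvd_left _ _).trans (dvd_pow_self _ two_ne_zero)
      have d2 : Nat.gcd p.1 p.2 ∣ p.2^2 := (Nat.gcd_dvd_right _ _).trans (dvd_pow_self _ two_ne_zero)
      exact h3 ▸ (Nat.dvd_add d1 d2)
    · omega
  · intro g hg
    rcases Finset.eq_empty_or_nonempty (R.filter (fun p => Nat.gcd p.1 p.2 = g)) with he | ⟨q, hq⟩
    · rw [he]; simp
    · simp only [Finset.mem_filter] at hq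
      obtain ⟨hqR, hqg⟩ := hq
      obtain ⟨hq1, hq2, hq3⟩ := hmem q hqR
      have hg1 : 1 ≤ g := by rw [← hqg]; exact Nat.gcd_pos_of_pos_left _ (by omega)
      have hg2m : g^2 ∣ m := by
        have d1 : g ∣ q.1 := hqg ▸ Nat.gcd_dvd_left _ _
        have d2 : g ∣ q.2 := hqg ▸ Nat.gcd_dvd_right _ _
        rw [← hq3]
        exact Nat.dvd_add (pow_dvd_pow_of_dvd d1 2) (pow_dvd_pow_of_dvd d2 2)
      set k := m / g^2 with hkdef
      have hk : g^2 * k = m := Nat.mul_div_cancel' hg2m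
      -- properties of fiber members
      have props : ∀ p : ℕ × ℕ, p ∈ R.filter (fun p => Nat.gcd p.1 p.2 = g) →
          (g * (p.1 / g) = p.1 ∧ g * (p.2 / g) = p.2) ∧ 1 ≤ p.1 / g ∧ 1 ≤ p.2 / g ∧
          Nat.Coprime (p.1 / g) (p.2 / g) ∧ (p.1 / g)^2 + (p.2 / g)^2 = k := by
        intro p hp
        simp only [Finset.mem_filter] at hp
        obtain ⟨hpR, hpg⟩ := hp
        obtain ⟨h1, h2, h3⟩ := hmem p hpR
        have d1 : g ∣ p.1 := hpg ▸ Nat.gcd_dvd_left _ _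
        have d2 : g ∣ p.2 := hpg ▸ Nat.gcd_dvd_right _ _
        have e1 : g * (p.1 / g) = p.1 := Nat.mul_div_cancel' d1
        have e2 : g * (p.2 / g) = p.2 := Nat.mul_div_cancel' d2
        have hcop : Nat.Coprime (p.1 / g) (p.2 / g) := by
          have h4 : 0 < Nat.gcd p.1 p.2 := by rw [hpg]; omega
          have := Nat.coprime_div_gcd_div_gcd h4
          rwa [hpg] at this
        have hdp1 : 1 ≤ p.1 / g := Nat.div_pos (Nat.le_of_dvd (by omega) d1) (by omega)
        have hdp2 : 1 ≤ p.2 / g := Nat.div_pos (Nat.le_of_dvd (by omega) d2) (by omega)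
        have hsum : (p.1 / g)^2 + (p.2 / g)^2 = k := by
          have hgg : 0 < g^2 := by positivity
          apply Nat.eq_of_mul_eq_mul_left hgg
          calc g^2 * ((p.1 / g)^2 + (p.2 / g)^2)
              = (g * (p.1 / g))^2 + (g * (p.2 / g))^2 := by ring
            _ = p.1^2 + p.2^2 := by rw [e1, e2]
            _ = m := h3
            _ = g^2 * k := hk.symm
        exact ⟨⟨e1, e2⟩, hdp1, hdp2, hcop, hsum⟩
      -- k is at least 2
      have hk2 : 2 ≤ k := by
        obtain ⟨⟨e1, e2⟩, hx1, hy1, hcop, hsum⟩ := props q (by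
          simp only [Finset.mem_filter]; exact ⟨hqR, hqg⟩)
        nlinarith
      haveI : NeZero k := ⟨by omega⟩
      -- inject into square roots of -1 mod k
      have hinj := Finset.card_le_card_of_injOn
        (f := fun p : ℕ × ℕ => ((p.1 / g : ℕ) : ZMod k) * ((p.2 / g : ℕ) : ZMod k)⁻¹)
        (s := R.filter (fun p => Nat.gcd p.1 p.2 = g))
        (t := Finset.univ.filter (fun s : ZMod k => s^2 = -1)) ?_ ?_
      · refine hinj.trans ((sqrt_neg_one_card k hk2).trans ?_)
        have hkm : k ∣ m := ⟨g^2, by rw [← hk]; ring⟩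
        have hsub : k.divisors ⊆ m.divisors := Nat.divisors_subset_of_dvd (by omega) hkm
        have := Finset.card_le_card hsub
        have := Nat.pow_le_pow_left this 2
        omega
      · -- maps to
        intro p hp
        obtain ⟨⟨e1, e2⟩, hx1, hy1, hcop, hsum⟩ := props p hp
        simp only [Finset.coe_filter, Finset.mem_filter, Finset.mem_univ, true_and, Set.mem_setOf_eq]
        have hyk : Nat.Coprime (p.2 / g) k := coprime_circle hcop hsum
        have huy : IsUnit ((p.2 / g : ℕ) : ZMod k) := (ZMod.isUnit_iff_coprime _ k).mpr hyk
        have hiy := ZMod.mul_inv_of_unit _ huy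
        have hcirc : ((p.1 / g : ℕ) : ZMod k)^2 = -((p.2 / g : ℕ) : ZMod k)^2 := by
          have : (((p.1 / g)^2 + (p.2 / g)^2 : ℕ) : ZMod k) = ((k : ℕ) : ZMod k) := by
            rw [hsum]
          push_cast at this
          rw [ZMod.natCast_self] at this
          linear_combination this
        calc (((p.1 / g : ℕ) : ZMod k) * ((p.2 / g : ℕ) : ZMod k)⁻¹)^2
            = ((p.1 / g : ℕ) : ZMod k)^2 * (((p.2 / g : ℕ) : ZMod k)⁻¹)^2 := by ring
          _ = -(((p.2 / g : ℕ) : ZMod k) * ((p.2 / g : ℕ) : ZMod k)⁻¹)^2 := by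
              rw [hcirc]; ring
          _ = -1 := by rw [hiy]; simp
      · -- injectivity
        intro p hp p' hp' heq
        obtain ⟨⟨e1, e2⟩, hx1, hy1, hcop, hsum⟩ := props p hp
        obtain ⟨⟨e1', e2'⟩, hx1', hy1', hcop', hsum'⟩ := props p' hp'
        have := prim_inj k (p.1/g) (p.2/g) (p'.1/g) (p'.2/g) hk2 hx1 hy1 hx1' hy1'
          hcop hcop' hsum hsum' heq
        have hpp : p.1 = p'.1 := by rw [← e1, ← e1', this.1]
        have hqq : p.2 = p'.2 := by rw [← e2, ← e2', this.2]
        exact Prod.ext hpp hqq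

lemma divisor_bound_s3 {ε : ℝ} (hε : 0 < ε) :
    ∃ C : ℝ, 0 < C ∧ ∀ m : ℕ, 1 ≤ m → (m.divisors.card : ℝ) ≤ C * (m : ℝ) ^ ε := by
  set δ := ε / 2 with hδdef
  have hδ : 0 < δ := by positivity
  set T : ℕ := ⌈(2:ℝ) ^ (1/δ)⌉₊ + 2 with hTdef
  have hT2 : 2 ≤ T := by omega
  have hT0 : (0:ℝ) < T := by positivity
  set ε' : ℝ := ε / (2 * T) with hε'def
  have hε' : 0 < ε' := by positivity
  set C₀ : ℝ := 1 + 1 / (ε' * Real.log 2) with hC₀def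
  have hlog2 : 0 < Real.log 2 := Real.log_pos (by norm_num)
  have hC₀ : 1 ≤ C₀ := by
    rw [hC₀def]
    have h9 : 0 < 1 / (ε' * Real.log 2) := by positivity
    linarith
  refine ⟨C₀ ^ T, by positivity, ?_⟩
  intro m hm
  have hm0 : m ≠ 0 := by omega
  have hm1 : (1:ℝ) ≤ (m:ℝ) := by exact_mod_cast hm
  -- divisor count as a product
  have hd : (m.divisors.card : ℝ) = ∏ p ∈ m.primeFactors, ((m.factorization p + 1 : ℕ) : ℝ) := by
    rw [Nat.card_divisors hm0]
    push_cast
    rfl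
  set S := m.primeFactors with hS
  set A := S.filter (fun p => p < T) with hA
  set B := S.filter (fun p => ¬ p < T) with hB
  have hsplit : (m.divisors.card : ℝ)
      = (∏ p ∈ A, ((m.factorization p + 1 : ℕ) : ℝ)) *
        (∏ p ∈ B, ((m.factorization p + 1 : ℕ) : ℝ)) := by
    rw [hd, hA, hB, Finset.prod_filter_mul_prod_filter_not]
  -- bound for the large primes
  have hBbound : (∏ p ∈ B, ((m.factorization p + 1 : ℕ) : ℝ)) ≤ (m:ℝ) ^ δ := by
    have hstep : ∀ p ∈ B, ((m.factorization p + 1 : ℕ) : ℝ)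
        ≤ ((p ^ m.factorization p : ℕ) : ℝ) ^ δ := by
      intro p hp
      simp only [hB, hA, Finset.mem_filter, not_lt] at hp
      obtain ⟨hpS, hpT⟩ := hp
      have hp2 : 2 ≤ p := (Nat.prime_of_mem_primeFactors hpS).two_le
      have hpδ : (2:ℝ) ≤ (p:ℝ) ^ δ := by
        have h1 : (2:ℝ) ^ (1/δ) ≤ (p:ℝ) := by
          calc (2:ℝ) ^ (1/δ) ≤ (⌈(2:ℝ) ^ (1/δ)⌉₊ : ℝ) := Nat.le_ceil _
            _ ≤ (T:ℝ) := by rw [hTdef]; push_cast; linarith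
            _ ≤ (p:ℝ) := by exact_mod_cast hpT
        calc (2:ℝ) = ((2:ℝ) ^ (1/δ)) ^ δ := by
              rw [← Real.rpow_mul (by norm_num : (0:ℝ) ≤ 2), one_div,
                inv_mul_cancel₀ (ne_of_gt hδ), Real.rpow_one]
          _ ≤ (p:ℝ) ^ δ := Real.rpow_le_rpow (by positivity) h1 (le_of_lt hδ)
      set e := m.factorization p
      have h1 : ((e + 1 : ℕ) : ℝ) ≤ (2:ℝ) ^ e := by
        have := (Nat.lt_two_pow_self (n := e))
        have h2 : (e + 1 : ℕ) ≤ 2 ^ e := this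
        calc ((e + 1 : ℕ) : ℝ) ≤ ((2 ^ e : ℕ) : ℝ) := by exact_mod_cast h2
          _ = (2:ℝ) ^ e := by push_cast; ring
      have h2 : (2:ℝ) ^ e ≤ ((p:ℝ) ^ δ) ^ e := pow_le_pow_left₀ (by norm_num) hpδ e
      have h3 : ((p:ℝ) ^ δ) ^ e = ((p:ℝ) ^ e) ^ δ := by
        rw [← Real.rpow_natCast ((p:ℝ) ^ δ) e, ← Real.rpow_mul (by positivity),
          mul_comm, Real.rpow_mul (by positivity), Real.rpow_natCast]
      calc ((e + 1 : ℕ) : ℝ) ≤ (2:ℝ) ^ e := h1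
        _ ≤ ((p:ℝ) ^ δ) ^ e := h2
        _ = ((p:ℝ) ^ e) ^ δ := h3
        _ = ((p ^ e : ℕ) : ℝ) ^ δ := by push_cast; ring_nf
    calc (∏ p ∈ B, ((m.factorization p + 1 : ℕ) : ℝ))
        ≤ ∏ p ∈ B, ((p ^ m.factorization p : ℕ) : ℝ) ^ δ := by
          apply Finset.prod_le_prod
          · intro p hp; positivity
          · exact hstep
      _ = (∏ p ∈ B, ((p ^ m.factorization p : ℕ) : ℝ)) ^ δ :=
          Real.finset_prod_rpow B _ (fun p _ => by positivity) δ
      _ ≤ (m:ℝ) ^ δ := by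
          apply Real.rpow_le_rpow (by positivity) _ (le_of_lt hδ)
          have hdvd : (∏ p ∈ B, p ^ m.factorization p) ∣ m := by
            have h1 : (∏ p ∈ B, p ^ m.factorization p) ∣ ∏ p ∈ S, p ^ m.factorization p :=
              Finset.prod_dvd_prod_of_subset _ _ _ (Finset.filter_subset _ _)
            have h2 : ∏ p ∈ S, p ^ m.factorization p = m := by
              rw [hS, ← Nat.support_factorization]
              exact Nat.factorization_prod_pow_eq_self hm0
            rwa [h2] at h1
          have := Nat.le_of_dvd (by omega) hdvd
          exact_mod_cast this
  -- bound for the small primes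
  have hABound : (∏ p ∈ A, ((m.factorization p + 1 : ℕ) : ℝ)) ≤ C₀ ^ T * (m:ℝ) ^ (ε' * T) := by
    have hone : (1:ℝ) ≤ C₀ * (m:ℝ) ^ ε' := by
      have h1 : (1:ℝ) ≤ (m:ℝ) ^ ε' := Real.one_le_rpow hm1 (le_of_lt hε')
      nlinarith
    have hstep : ∀ p ∈ A, ((m.factorization p + 1 : ℕ) : ℝ) ≤ C₀ * (m:ℝ) ^ ε' := by
      intro p hp
      simp only [hA, Finset.mem_filter] at hp
      obtain ⟨hpS, hpT⟩ := hp
      have hp2 : 2 ≤ p := (Nat.prime_of_mem_primeFactors hpS).two_le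
      set e := m.factorization p with he
      have hpe : 2 ^ e ≤ m := by
        calc 2 ^ e ≤ p ^ e := Nat.pow_le_pow_left hp2 e
          _ ≤ m := Nat.le_of_dvd (by omega) (Nat.ordProj_dvd m p)
      have hlog : (e : ℝ) * Real.log 2 ≤ Real.log m := by
        have h1 : ((2:ℝ)) ^ e ≤ (m:ℝ) := by exact_mod_cast hpe
        have h2 := Real.log_le_log (by positivity) h1
        rwa [Real.log_pow] at h2
      have hloglog : Real.log m ≤ (m:ℝ) ^ ε' / ε' := Real.log_le_rpow_div (by positivity) hε'
      have hee : (e : ℝ) ≤ (m:ℝ) ^ ε' / (ε' * Real.log 2) := by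
        rw [le_div_iff₀ (by positivity)]
        calc (e:ℝ) * (ε' * Real.log 2) = ((e:ℝ) * Real.log 2) * ε' := by ring
          _ ≤ Real.log m * ε' := by nlinarith
          _ ≤ ((m:ℝ) ^ ε' / ε') * ε' := by nlinarith
          _ = (m:ℝ) ^ ε' := by field_simp
      have hmε : (1:ℝ) ≤ (m:ℝ) ^ ε' := Real.one_le_rpow hm1 (le_of_lt hε')
      have : ((e + 1 : ℕ) : ℝ) = (e:ℝ) + 1 := by push_cast; ring
      rw [this, hC₀def]
      calc (e:ℝ) + 1 ≤ (m:ℝ) ^ ε' / (ε' * Real.log 2) + 1 := by linarith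
        _ = (m:ℝ) ^ ε' * (1 / (ε' * Real.log 2)) + 1 := by ring
        _ ≤ (m:ℝ) ^ ε' * (1 / (ε' * Real.log 2)) + (m:ℝ) ^ ε' * 1 := by nlinarith
        _ = (1 + 1 / (ε' * Real.log 2)) * (m:ℝ) ^ ε' := by ring
    have hcardA : A.card ≤ T := by
      have h1 : A ⊆ Finset.range T := by
        intro p hp
        simp only [hA, Finset.mem_filter] at hp
        exact Finset.mem_range.mpr hp.2
      calc A.card ≤ (Finset.range T).card := Finset.card_le_card h1
        _ = T := Finset.card_range T
    calc (∏ p ∈ A, ((m.factorization p + 1 : ℕ) : ℝ))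
        ≤ ∏ p ∈ A, (C₀ * (m:ℝ) ^ ε') := Finset.prod_le_prod (fun p _ => by positivity) hstep
      _ = (C₀ * (m:ℝ) ^ ε') ^ A.card := by rw [Finset.prod_const]
      _ ≤ (C₀ * (m:ℝ) ^ ε') ^ T := pow_le_pow_right₀ hone hcardA
      _ = C₀ ^ T * ((m:ℝ) ^ ε') ^ T := by rw [mul_pow]
      _ = C₀ ^ T * (m:ℝ) ^ (ε' * T) := by
          rw [← Real.rpow_natCast ((m:ℝ) ^ ε') T, ← Real.rpow_mul (by positivity)]
  -- combine
  have hεsum : ε' * T = δ := by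
    rw [hε'def, hδdef]
    field_simp
  have hfin : (m.divisors.card : ℝ) ≤ C₀ ^ T * (m:ℝ) ^ δ * (m:ℝ) ^ δ := by
    rw [hsplit]
    have h1 : (0:ℝ) ≤ ∏ p ∈ A, ((m.factorization p + 1 : ℕ) : ℝ) :=
      Finset.prod_nonneg (fun p _ => by positivity)
    have h2 : (0:ℝ) ≤ ∏ p ∈ B, ((m.factorization p + 1 : ℕ) : ℝ) :=
      Finset.prod_nonneg (fun p _ => by positivity)
    have h3 := hABound
    rw [hεsum] at h3
    have h4 : (0:ℝ) ≤ C₀ ^ T * (m:ℝ) ^ δ := by positivity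
    exact mul_le_mul h3 hBbound h2 h4
  calc (m.divisors.card : ℝ) ≤ C₀ ^ T * (m:ℝ) ^ δ * (m:ℝ) ^ δ := hfin
    _ = C₀ ^ T * ((m:ℝ) ^ δ * (m:ℝ) ^ δ) := by ring
    _ = C₀ ^ T * (m:ℝ) ^ ε := by
        rw [← Real.rpow_add (by positivity : (0:ℝ) < (m:ℝ))]
        rw [hδdef]
        norm_num

lemma circle_identity (x1 y1 x2 y2 x3 y3 m : ℤ)
    (h1 : x1^2 + y1^2 = m) (h2 : x2^2 + y2^2 = m) (h3 : x3^2 + y3^2 = m) :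
    4 * m * ((x2-x1)*(y3-y1)-(x3-x1)*(y2-y1))^2
      = ((x1-x2)^2+(y1-y2)^2) * (((x1-x3)^2+(y1-y3)^2) * ((x2-x3)^2+(y2-y3)^2)) := by
  linear_combination ((3)*y3^2*m + (-1)*y3^4 + (-1)*x3^2*m + (-2)*x3^2*y3^2 + (-1)*x3^4 + (-6)*y2*y3*m + (2)*y2*y3^3 + (2)*y2*x3^2*y3 + (3)*y2^2*m + (-2)*y2^2*y3^2 + (-2)*y2^2*x3^2 + (2)*y2^3*y3 + (-1)*y2^4 + (2)*x2*x3*m + (-2)*x2*x3*y3^2 + (-2)*x2*x3^3 + (8)*x2*y2*x3*y3 + (-2)*x2*y2^2*x3 + (-1)*x2^2*m + (-2)*x2^2*y3^2 + (6)*x2^2*x3^2 + (2)*x2^2*y2*y3 + (-2)*x2^2*y2^2 + (-2)*x2^3*x3 + (-1)*x2^4 + (2)*y1*y3^3 + (2)*y1*x3^2*y3 + (-2)*y1*y2*y3^2 + (2)*y1*y2*x3^2 + (-2)*y1*y2^2*y3 + (2)*y1*y2^3 + (-4)*y1*x2*x3*y3 + (-4)*y1*x2*y2*x3 + (2)*y1*x2^2*y3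 + (2)*y1*x2^2*y2 + (-1)*y1^2*y3^2 + (-1)*y1^2*x3^2 + (2)*y1^2*y2*y3 + (-1)*y1^2*y2^2 + (2)*y1^2*x2*x3 + (-1)*y1^2*x2^2 + (2)*x1*x3*y3^2 + (2)*x1*x3^3 + (-4)*x1*y2*x3*y3 + (2)*x1*y2^2*x3 + (2)*x1*x2*y3^2 + (-2)*x1*x2*x3^2 + (-4)*x1*x2*y2*y3 + (2)*x1*x2*y2^2 + (-2)*x1*x2^2*x3 + (2)*x1*x2^3 + (-1)*x1^2*y3^2 + (-1)*x1^2*x3^2 + (2)*x1^2*y2*y3 + (-1)*x1^2*y2^2 + (2)*x1^2*x2*x3 + (-1)*x1^2*x2^2) * h1 + ((-2)*m^2 + (1)*y3^2*m + (-1)*y3^4 + (5)*x3^2*m + (-2)*x3^2*y3^2 + (-1)*x3^4 + (2)*y2*y3*m + (2)*y2*y3^3 + (2)*y2*x3^2*y3 + (-1)*y2^2*m + (-1)*y2^2*y3^2 + (-1)*y2^2*x3^2 + (-2)*x2*x3*m + (2)*x2*x3*y3^2 + (2)*x2*x3^3 + (-1)*x2^2*m + (-1)*x2^2*y3^2 +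 (-1)*x2^2*x3^2 + (-4)*y1*y3*m + (2)*y1*y3^3 + (2)*y1*x3^2*y3 + (2)*y1*y2*m + (-2)*y1*y2*y3^2 + (2)*y1*y2*x3^2 + (2)*y1*y2^2*y3 + (-4)*y1*x2*x3*y3 + (2)*y1*x2^2*y3 + (4)*y1^2*m + (-8)*y1^2*x3^2 + (-4)*y1^2*y2*y3 + (4)*y1^2*x2*x3 + (-2)*x1*x3*y3^2 + (-2)*x1*x3^3 + (-4)*x1*y2*x3*y3 + (2)*x1*y2^2*x3 + (2)*x1*x2*m + (2)*x1*x2*y3^2 + (-2)*x1*x2*x3^2 + (2)*x1*x2^2*x3 + (8)*x1*y1*x3*y3 + (-4)*x1*y1*y2*x3 + (-4)*x1*y1*x2*y3) * h2 + ((2)*m^2 + (-2)*y3^2*m + (-2)*x3^2*m + (4)*y2*y3*m + (-4)*y2^2*m + (4)*y1*y3*m + (-2)*y1*y2*m + (2)*y1*y2*y3^2 + (2)*y1*y2*x3^2 + (-4)*y1*y2^2*y3 + (-4)*y1*x2*y2*x3 + (-4)*y1^2*m + (-4)*y1^2*y2*y3 + (8)*y1^2*y2^2 + (4)*y1^2*x2*x3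 + (4)*x1*y2^2*x3 + (-2)*x1*x2*m + (2)*x1*x2*y3^2 + (2)*x1*x2*x3^2 + (-4)*x1*x2*y2*y3 + (-4)*x1*y1*y2*x3 + (-4)*x1*y1*x2*y3 + (8)*x1*y1*x2*y2) * h3

lemma collinear_helper (a1 a2 u1 u2 v1 v2 : ℤ)
    (hb : 2*(a1*u1 + a2*u2) + (u1^2+u2^2) = 0)
    (hc : 2*(a1*v1 + a2*v2) + (v1^2+v2^2) = 0)
    (hdet : u1*v2 - v1*u2 = 0) :
    (u1 = 0 ∧ u2 = 0) ∨ (v1 = 0 ∧ v2 = 0) ∨ (u1 = v1 ∧ u2 = v2) := by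
  by_cases hu : u1 = 0 ∧ u2 = 0
  · exact Or.inl hu
  · have hU : 0 < u1^2 + u2^2 := by
      rcases (not_and_or.mp hu) with h | h
      · have : 0 < u1^2 := by positivity
        nlinarith [sq_nonneg u2]
      · have : 0 < u2^2 := by positivity
        nlinarith [sq_nonneg u1]
    have e1 : (u1^2+u2^2)*v1 = (u1*v1+u2*v2)*u1 := by linear_combination (-u2)*hdet
    have e2 : (u1^2+u2^2)*v2 = (u1*v1+u2*v2)*u2 := by linear_combination (u1)*hdet
    have g : (u1^2+u2^2)*(v1^2+v2^2) = (u1*v1+u2*v2)^2 := by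
      linear_combination v1*e1 + v2*e2
    have h : (u1^2+u2^2)*(v1^2+v2^2) = (u1^2+u2^2)*(u1*v1+u2*v2) := by
      linear_combination (-2*a1)*e1 + (-2*a2)*e2 + (u1^2+u2^2)*hc - (u1*v1+u2*v2)*hb
    have hV : v1^2+v2^2 = u1*v1+u2*v2 := mul_left_cancel₀ (ne_of_gt hU) h
    by_cases hv : v1^2 + v2^2 = 0
    · refine Or.inr (Or.inl ?_)
      constructor
      · nlinarith [sq_nonneg v1, sq_nonneg v2]
      · nlinarith [sq_nonneg v1, sq_nonneg v2]
    · have hV0 : 0 < v1^2+v2^2 := by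
        rcases lt_or_gt_of_ne hv with h' | h'
        · nlinarith [sq_nonneg v1, sq_nonneg v2]
        · exact h'
      have hUV : u1^2+u2^2 = v1^2+v2^2 := by
        have g' : (u1^2+u2^2)*(v1^2+v2^2) = (v1^2+v2^2)*(v1^2+v2^2) := by
          rw [g, ← hV]; ring
        exact mul_right_cancel₀ (ne_of_gt hV0) g'
      have hz : (u1-v1)^2 + (u2-v2)^2 = 0 := by
        have : (u1-v1)^2 + (u2-v2)^2 = (u1^2+u2^2) - 2*(u1*v1+u2*v2) + (v1^2+v2^2) := by ring
        rw [this, hUV, ← hV]; ring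
      refine Or.inr (Or.inr ?_)
      constructor
      · nlinarith [sq_nonneg (u1-v1), sq_nonneg (u2-v2)]
      · nlinarith [sq_nonneg (u1-v1), sq_nonneg (u2-v2)]

lemma collinear_circle (a1 a2 b1 b2 c1 c2 m : ℤ)
    (ha : a1^2+a2^2 = m) (hb : b1^2+b2^2 = m) (hc : c1^2+c2^2 = m)
    (hdet : (b1-a1)*(c2-a2) - (c1-a1)*(b2-a2) = 0) :
    (a1 = b1 ∧ a2 = b2) ∨ (a1 = c1 ∧ a2 = c2) ∨ (b1 = c1 ∧ b2 = c2) := by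
  have h := collinear_helper a1 a2 (b1-a1) (b2-a2) (c1-a1) (c2-a2)
    (by linear_combination hb - ha) (by linear_combination hc - ha)
    (by linear_combination hdet)
  rcases h with ⟨h1, h2⟩ | ⟨h1, h2⟩ | ⟨h1, h2⟩
  · exact Or.inl ⟨by omega, by omega⟩
  · exact Or.inr (Or.inl ⟨by omega, by omega⟩)
  · exact Or.inr (Or.inr ⟨by omega, by omega⟩)

lemma two_points_only (W : ℝ) (hW0 : 0 < W) (m : ℕ) (hcase : 2*W^6 < (m:ℝ))
    (F : Finset (ℕ × ℕ))
    (hmemF : ∀ p ∈ F, 1 ≤ p.1 ∧ 1 ≤ p.2 ∧ (4*p.1-1)^2 + (4*p.2-1)^2 = m)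
    (hwinF : ∀ p ∈ F, ∀ q ∈ F, |((4*p.1-1 : ℕ):ℝ) - ((4*q.1-1 : ℕ):ℝ)| ≤ W ∧
      |((4*p.2-1 : ℕ):ℝ) - ((4*q.2-1 : ℕ):ℝ)| ≤ W) :
    F.card ≤ 2 := by
  by_contra hcon
  push_neg at hcon
  obtain ⟨p, hp, q, hq, r, hr, hpq, hpr, hqr⟩ := Finset.two_lt_card.mp hcon
  obtain ⟨hp1, hp2, hfmp⟩ := hmemF p hp
  obtain ⟨hq1, hq2, hfmq⟩ := hmemF q hq
  obtain ⟨hr1, hr2, hfmr⟩ := hmemF r hr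
  set P1 : ℤ := ((4*p.1-1 : ℕ) : ℤ) with hP1
  set P2 : ℤ := ((4*p.2-1 : ℕ) : ℤ) with hP2
  set Q1 : ℤ := ((4*q.1-1 : ℕ) : ℤ) with hQ1
  set Q2 : ℤ := ((4*q.2-1 : ℕ) : ℤ) with hQ2
  set R1 : ℤ := ((4*r.1-1 : ℕ) : ℤ) with hR1
  set R2 : ℤ := ((4*r.2-1 : ℕ) : ℤ) with hR2
  have cp : P1^2 + P2^2 = (m:ℤ) := by rw [hP1, hP2, ← hfmp]; push_cast; ring
  have cq : Q1^2 + Q2^2 = (m:ℤ) := by rw [hQ1, hQ2, ← hfmq]; push_cast; ring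
  have cr : R1^2 + R2^2 = (m:ℤ) := by rw [hR1, hR2, ← hfmr]; push_cast; ring
  have dpq : ¬(P1 = Q1 ∧ P2 = Q2) := by
    rintro ⟨e1, e2⟩
    apply hpq
    rw [hP1, hQ1] at e1
    rw [hP2, hQ2] at e2
    have f1 : 4*p.1-1 = 4*q.1-1 := by exact_mod_cast e1
    have f2 : 4*p.2-1 = 4*q.2-1 := by exact_mod_cast e2
    exact Prod.ext (by omega) (by omega)
  have dpr : ¬(P1 = R1 ∧ P2 = R2) := by
    rintro ⟨e1, e2⟩
    apply hpr
    rw [hP1, hR1] at e1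
    rw [hP2, hR2] at e2
    have f1 : 4*p.1-1 = 4*r.1-1 := by exact_mod_cast e1
    have f2 : 4*p.2-1 = 4*r.2-1 := by exact_mod_cast e2
    exact Prod.ext (by omega) (by omega)
  have dqr : ¬(Q1 = R1 ∧ Q2 = R2) := by
    rintro ⟨e1, e2⟩
    apply hqr
    rw [hQ1, hR1] at e1
    rw [hQ2, hR2] at e2
    have f1 : 4*q.1-1 = 4*r.1-1 := by exact_mod_cast e1
    have f2 : 4*q.2-1 = 4*r.2-1 := by exact_mod_cast e2
    exact Prod.ext (by omega) (by omega)
  set D : ℤ := (Q1-P1)*(R2-P2)-(R1-P1)*(Q2-P2) with hD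
  have hD0 : D ≠ 0 := by
    intro h0
    rcases collinear_circle P1 P2 Q1 Q2 R1 R2 (m:ℤ) cp cq cr h0 with h | h | h
    · exact dpq ⟨h.1, h.2⟩
    · exact dpr ⟨h.1, h.2⟩
    · exact dqr ⟨h.1, h.2⟩
  have hD1 : (1:ℤ) ≤ D^2 := by
    have h1 : 1 ≤ |D| := Int.one_le_abs (by exact hD0)
    nlinarith [abs_nonneg D, sq_abs D]
  have hident := circle_identity P1 P2 Q1 Q2 R1 R2 (m:ℤ) cp cq cr
  obtain ⟨hwpq1, hwpq2⟩ := hwinF p hp q hq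
  obtain ⟨hwpr1, hwpr2⟩ := hwinF p hp r hr
  obtain ⟨hwqr1, hwqr2⟩ := hwinF q hq r hr
  have bnd : ∀ x y : ℤ, |((x:ℝ)) - ((y:ℝ))| ≤ W → ((x - y : ℤ) : ℝ)^2 ≤ W^2 := by
    intro x y hxy
    have h1 : ((x - y : ℤ) : ℝ) = (x:ℝ) - (y:ℝ) := by push_cast; ring
    rw [h1]
    rw [abs_le] at hxy
    nlinarith
  have bA : ((P1-Q1 : ℤ):ℝ)^2 + ((P2-Q2 : ℤ):ℝ)^2 ≤ 2*W^2 := by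
    have b1 := bnd P1 Q1 (by rw [hP1, hQ1]; push_cast; exact_mod_cast hwpq1)
    have b2 := bnd P2 Q2 (by rw [hP2, hQ2]; push_cast; exact_mod_cast hwpq2)
    linarith
  have bB : ((P1-R1 : ℤ):ℝ)^2 + ((P2-R2 : ℤ):ℝ)^2 ≤ 2*W^2 := by
    have b1 := bnd P1 R1 (by rw [hP1, hR1]; push_cast; exact_mod_cast hwpr1)
    have b2 := bnd P2 R2 (by rw [hP2, hR2]; push_cast; exact_mod_cast hwpr2)
    linarith
  have bC : ((Q1-R1 : ℤ):ℝ)^2 + ((Q2-R2 : ℤ):ℝ)^2 ≤ 2*W^2 := by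
    have b1 := bnd Q1 R1 (by rw [hQ1, hR1]; push_cast; exact_mod_cast hwqr1)
    have b2 := bnd Q2 R2 (by rw [hQ2, hR2]; push_cast; exact_mod_cast hwqr2)
    linarith
  have hidR : 4 * (m:ℝ) * ((D:ℤ):ℝ)^2
      = (((P1-Q1:ℤ):ℝ)^2+((P2-Q2:ℤ):ℝ)^2) *
        ((((P1-R1:ℤ):ℝ)^2+((P2-R2:ℤ):ℝ)^2) * (((Q1-R1:ℤ):ℝ)^2+((Q2-R2:ℤ):ℝ)^2)) := by
    exact_mod_cast congrArg (fun t : ℤ => (t:ℝ)) hident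
  have hD1R : (1:ℝ) ≤ ((D:ℤ):ℝ)^2 := by exact_mod_cast hD1
  have hA0 : (0:ℝ) ≤ ((P1-Q1:ℤ):ℝ)^2+((P2-Q2:ℤ):ℝ)^2 := by positivity
  have hC0 : (0:ℝ) ≤ ((Q1-R1:ℤ):ℝ)^2+((Q2-R2:ℤ):ℝ)^2 := by positivity
  have hprod : (((P1-Q1:ℤ):ℝ)^2+((P2-Q2:ℤ):ℝ)^2) *
        ((((P1-R1:ℤ):ℝ)^2+((P2-R2:ℤ):ℝ)^2) * (((Q1-R1:ℤ):ℝ)^2+((Q2-R2:ℤ):ℝ)^2))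
      ≤ (2*W^2) * ((2*W^2) * (2*W^2)) := by
    apply mul_le_mul bA _ (by positivity) (by positivity)
    apply mul_le_mul bB bC hC0 (by positivity)
  have c1 : 4*(m:ℝ) * 1 ≤ 4*(m:ℝ) * ((D:ℤ):ℝ)^2 :=
    mul_le_mul_of_nonneg_left hD1R (by positivity)
  have c2 : (2*W^2) * ((2*W^2) * (2*W^2)) = 8*W^6 := by ring
  linarith

/-- Polynomial-growth pair-counting bound: for frequencies `z_n` satisfying the radial
Dirichlet eigenvalue asymptotics on the disc, for every `ε > 0` the number of pairs
`(n, n')` of positive integers with `z_n, z_{n'}` in an interval `I` of length `L ≥ 2`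
and `|z_n² + z_{n'}² − ℓ| < 1` is at most `C_ε · L^ε`. -/
theorem pair_count_interval_polynomial_bound (C₁ : ℝ) (hC₁ : 0 < C₁) (z : ℕ → ℝ)
    (hz : ∀ n : ℕ, 1 ≤ n → |z n - π * (n - 1 / 4)| ≤ C₁ / n) :
    ∀ ε > (0 : ℝ), ∃ C > (0 : ℝ), ∀ a L : ℝ, L ≥ 2 → ∀ ℓ : ℝ,
      (({p : ℕ × ℕ | 1 ≤ p.1 ∧ 1 ≤ p.2 ∧
          z p.1 ∈ Set.Icc a (a + L) ∧ z p.2 ∈ Set.Icc a (a + L) ∧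
          |z p.1 ^ 2 + z p.2 ^ 2 - ℓ| < 1}).ncard : ℝ)
        ≤ C * L ^ ε := by
  intro ε hε
  have hπ := Real.pi_gt_three
  have hπ0 : 0 < π := by linarith
  -- divisor bound constant for δ = ε/18
  set δ : ℝ := ε / 18 with hδdef
  have hδ : 0 < δ := by positivity
  obtain ⟨Cd, hCd0, hCd⟩ := divisor_bound_s3 hδ
  -- constants
  set K : ℝ := 2 * π * C₁ + C₁ ^ 2 with hKdef
  have hK0 : 0 < K := by positivity
  set Dn : ℕ := ⌈8 * K + 4⌉₊ with hDndef
  set c₇ : ℝ := 2 * (2 * (1 + C₁)) ^ 6 with hc₇def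
  have hc₇0 : 0 < c₇ := by positivity
  refine ⟨((Dn : ℝ) + 1) * (2 + 2 * Cd ^ 3 * c₇ ^ (ε / 6)), by positivity, ?_⟩
  intro a L hL ℓ
  have hL0 : (0:ℝ) < L := by linarith
  have hLε : (1:ℝ) ≤ L ^ ε := Real.one_le_rpow (by linarith) (le_of_lt hε)
  set S := {p : ℕ × ℕ | 1 ≤ p.1 ∧ 1 ≤ p.2 ∧
      z p.1 ∈ Set.Icc a (a + L) ∧ z p.2 ∈ Set.Icc a (a + L) ∧
      |z p.1 ^ 2 + z p.2 ^ 2 - ℓ| < 1} with hSdef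
  -- basic estimate for each index appearing
  have haux : ∀ n : ℕ, 1 ≤ n → z n ∈ Set.Icc a (a + L) →
      a - C₁ ≤ π * ((n:ℝ) - 1/4) ∧ π * ((n:ℝ) - 1/4) ≤ a + L + C₁ := by
    intro n hn hzn
    have hn1 : (1:ℝ) ≤ (n:ℝ) := by exact_mod_cast hn
    have h1 := hz n hn
    have h2 : C₁ / (n:ℝ) ≤ C₁ := by
      rw [div_le_iff₀ (by linarith)]
      nlinarith
    have h3 := abs_le.mp h1
    obtain ⟨hzl, hzr⟩ := hzn
    constructor <;> nlinarith
  -- window estimate: indices appearing are within W of each other (after x ↦ 4x-1)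
  set W : ℝ := 2 * (1 + C₁) * L with hWdef
  have hW0 : 0 < W := by positivity
  have hwin : ∀ n n' : ℕ, 1 ≤ n → 1 ≤ n' → z n ∈ Set.Icc a (a + L) →
      z n' ∈ Set.Icc a (a + L) → |((4*n-1 : ℕ) : ℝ) - ((4*n'-1 : ℕ) : ℝ)| ≤ W := by
    intro n n' hn hn' h1 h2
    have e1 : ((4*n-1 : ℕ) : ℝ) = 4*(n:ℝ) - 1 := by
      have : 1 ≤ 4*n := by omega
      push_cast [this]
      ring
    have e2 : ((4*n'-1 : ℕ) : ℝ) = 4*(n':ℝ) - 1 := by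
      have : 1 ≤ 4*n' := by omega
      push_cast [this]
      ring
    rw [e1, e2]
    obtain ⟨ha1, ha2⟩ := haux n hn h1
    obtain ⟨hb1, hb2⟩ := haux n' hn' h2
    rw [abs_le]
    constructor <;> nlinarith
  -- squared frequency estimate
  have hsq : ∀ n : ℕ, 1 ≤ n → |z n ^ 2 - π^2/16 * ((4*n-1 : ℕ) : ℝ)^2| ≤ K := by
    intro n hn
    have hn1 : (1:ℝ) ≤ (n:ℝ) := by exact_mod_cast hn
    have e1 : ((4*n-1 : ℕ) : ℝ) = 4*(n:ℝ) - 1 := by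
      have : 1 ≤ 4*n := by omega
      push_cast [this]
      ring
    rw [e1]
    have hid : π^2/16 * (4*(n:ℝ) - 1)^2 = (π * ((n:ℝ) - 1/4))^2 := by ring
    rw [hid]
    set w : ℝ := π * ((n:ℝ) - 1/4) with hwdef
    have hw0 : 0 ≤ w := by
      have : (0:ℝ) ≤ (n:ℝ) - 1/4 := by linarith
      positivity
    have h1 := abs_le.mp (hz n hn)
    have h2 : 0 < (n:ℝ) := by linarith
    have hcn : C₁ / (n:ℝ) ≤ C₁ := by rw [div_le_iff₀ h2]; nlinarith
    have hcn0 : 0 < C₁ / (n:ℝ) := by positivity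
    have key : |z n ^ 2 - w^2| = |z n - w| * |z n + w| := by
      rw [← abs_mul]
      congr 1
      ring
    rw [key]
    have h3 : |z n + w| ≤ 2*w + C₁ / n := by
      rw [abs_le]
      constructor <;> nlinarith
    have h4 : |z n - w| * |z n + w| ≤ (C₁ / n) * (2*w + C₁/n) := by
      apply mul_le_mul (hz n hn) h3 (abs_nonneg _) (le_of_lt hcn0)
    refine h4.trans ?_
    rw [hKdef, hwdef]
    have h5 : (C₁ / n) * (2 * (π * ((n:ℝ) - 1/4))) ≤ 2 * π * C₁ := by
      rw [div_mul_eq_mul_div, div_le_iff₀ h2]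
      nlinarith
    have h6 : (C₁ / n) * (C₁ / n) ≤ C₁^2 := by
      have := mul_le_mul hcn hcn (le_of_lt hcn0) (le_of_lt hC₁)
      nlinarith
    nlinarith
  -- m-value estimate
  set fm : ℕ × ℕ → ℕ := fun p => (4*p.1-1)^2 + (4*p.2-1)^2 with hfmdef
  have hmest : ∀ p ∈ S, |π^2/16 * ((fm p : ℕ) : ℝ) - ℓ| < 1 + 2*K := by
    intro p hp
    obtain ⟨hp1, hp2, hz1, hz2, hℓ⟩ := hp
    have h1 := hsq p.1 hp1
    have h2 := hsq p.2 hp2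
    have e : ((fm p : ℕ) : ℝ) = ((4*p.1-1 : ℕ) : ℝ)^2 + ((4*p.2-1 : ℕ) : ℝ)^2 := by
      rw [hfmdef]
      push_cast
      ring
    rw [e]
    rw [abs_lt] at hℓ ⊢
    rw [abs_le] at h1 h2
    constructor <;> nlinarith
  -- m values are at least 1
  have hm1 : ∀ p ∈ S, 1 ≤ fm p := by
    intro p hp
    obtain ⟨hp1, hp2, _⟩ := hp
    have : 1 ≤ 4*p.1-1 := by omega
    have h2 : 1 ≤ (4*p.1-1)^2 := Nat.one_le_pow _ _ (by omega)
    rw [hfmdef]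
    simp only []
    omega
  -- finiteness
  have hfin : S.Finite := by
    set N : ℕ := ⌈(a + L + C₁)/π + 1⌉₊ with hN
    apply Set.Finite.subset (Set.finite_Icc (1,1) (N,N))
    intro p hp
    obtain ⟨hp1, hp2, hz1, hz2, _⟩ := hp
    have key : ∀ n : ℕ, 1 ≤ n → z n ∈ Set.Icc a (a + L) → n ≤ N := by
      intro n hn h
      obtain ⟨_, h2⟩ := haux n hn h
      have hn1 : (1:ℝ) ≤ (n:ℝ) := by exact_mod_cast hn
      have h3 : (n:ℝ) ≤ (a + L + C₁)/π + 1 := by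
        rw [div_add' _ _ _ (ne_of_gt hπ0), le_div_iff₀ hπ0]
        nlinarith
      have h4 : (n:ℝ) ≤ (N:ℝ) := h3.trans (Nat.le_ceil _)
      exact_mod_cast h4
    exact ⟨⟨hp1, hp2⟩, ⟨key p.1 hp1 hz1, key p.2 hp2 hz2⟩⟩
  rw [Set.ncard_eq_toFinset_card S hfin]
  set B := hfin.toFinset with hBdef
  have hmemB : ∀ p, p ∈ B ↔ p ∈ S := fun p => hfin.mem_toFinset
  rcases Finset.eq_empty_or_nonempty B with hBe | hBne
  · rw [hBe]
    simp only [Finset.card_empty, Nat.cast_zero]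
    positivity
  · set T := B.image fm with hTdef
    have hTne : T.Nonempty := hBne.image fm
    set μ := T.min' hTne with hμdef
    have hμT : μ ∈ T := Finset.min'_mem T hTne
    -- range of m values
    have hrange : ∀ m ∈ T, m ≤ μ + Dn := by
      intro m hmT
      obtain ⟨p, hpB, hfmp⟩ := Finset.mem_image.mp hmT
      obtain ⟨q, hqB, hfmq⟩ := Finset.mem_image.mp hμT
      have est1 := hmest p ((hmemB p).mp hpB)
      have est2 := hmest q ((hmemB q).mp hqB)
      rw [hfmp] at est1
      rw [hfmq] at est2
      have hDnle : 8*K + 4 ≤ (Dn : ℝ) := Nat.le_ceil _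
      have hreal : (m : ℝ) ≤ (μ : ℝ) + (Dn : ℝ) := by
        rw [abs_lt] at est1 est2
        have h9 : (9:ℝ) < π^2 := by nlinarith
        rcases le_or_gt ((m:ℝ) - (μ:ℝ)) 0 with hd | hd
        · have hDn0 : (0:ℝ) ≤ (Dn:ℝ) := Nat.cast_nonneg Dn
          linarith
        · have hmul : (9/16) * ((m:ℝ) - (μ:ℝ)) ≤ (π^2/16) * ((m:ℝ) - (μ:ℝ)) := by
            apply mul_le_mul_of_nonneg_right _ (le_of_lt hd)
            linarith
          have hlt : (π^2/16) * ((m:ℝ) - (μ:ℝ)) < 2 + 4*K := by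
            have e : (π^2/16) * ((m:ℝ) - (μ:ℝ))
                = (π^2/16 * (m:ℝ) - ℓ) - (π^2/16 * (μ:ℝ) - ℓ) := by ring
            rw [e]
            linarith [est1.2, est2.1]
          linarith
      have : (m:ℝ) ≤ ((μ + Dn : ℕ) : ℝ) := by push_cast; linarith
      exact_mod_cast this
    have hTcard : T.card ≤ Dn + 1 := by
      have hsub : T ⊆ Finset.Icc μ (μ + Dn) := by
        intro m hmT
        rw [Finset.mem_Icc]
        exact ⟨Finset.min'_le T m hmT, hrange m hmT⟩
      calc T.card ≤ (Finset.Icc μ (μ + Dn)).card := Finset.card_le_card hsub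
        _ = Dn + 1 := by rw [Nat.card_Icc]; omega
    -- fiberwise decomposition
    have hfibsum : B.card = ∑ m ∈ T, (B.filter fun p => fm p = m).card :=
      Finset.card_eq_sum_card_fiberwise (fun p hp => Finset.mem_image_of_mem fm hp)
    set Q : ℝ := 2 + 2*Cd^3*(2*W^6)^(3*δ) with hQdef
    have hQ0 : 0 ≤ Q := by positivity
    have hQfib : ∀ m ∈ T, ((B.filter fun p => fm p = m).card : ℝ) ≤ Q := by
      intro m hmT
      rcases le_or_gt ((m:ℝ)) (2*W^6) with hcase | hcase
      · -- small m : divisor bound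
        obtain ⟨p₀, hp₀B, hfmp₀⟩ := Finset.mem_image.mp hmT
        have hm1' : 1 ≤ m := hfmp₀ ▸ hm1 p₀ ((hmemB p₀).mp hp₀B)
        have hinj : (B.filter fun p => fm p = m).card ≤
            (((Finset.range (m+1)) ×ˢ (Finset.range (m+1))).filter
              (fun q : ℕ × ℕ => 1 ≤ q.1 ∧ 1 ≤ q.2 ∧ q.1^2 + q.2^2 = m)).card := by
          apply Finset.card_le_card_of_injOn (fun p => (4*p.1-1, 4*p.2-1))
          · intro p hp
            simp only [Finset.coe_filter, Finset.mem_filter, Set.mem_setOf_eq] at hp ⊢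
            obtain ⟨hpB, hfmp⟩ := hp
            obtain ⟨hp1, hp2, _⟩ := (hmemB p).mp hpB
            have hx : (4*p.1-1)^2 + (4*p.2-1)^2 = m := hfmp
            have hxle : 4*p.1-1 ≤ (4*p.1-1)^2 := Nat.le_self_pow two_ne_zero _
            have hyle : 4*p.2-1 ≤ (4*p.2-1)^2 := Nat.le_self_pow two_ne_zero _
            refine ⟨Finset.mem_product.mpr ⟨Finset.mem_range.mpr (by omega),
              Finset.mem_range.mpr (by omega)⟩, by omega, by omega, hx⟩
          · intro p hp p' hp' heq
            simp only [Finset.coe_filter, Set.mem_setOf_eq] at hp hp'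
            obtain ⟨hp1, hp2, _⟩ := (hmemB p).mp hp.1
            obtain ⟨hp1', hp2', _⟩ := (hmemB p').mp hp'.1
            have h1 : 4*p.1-1 = 4*p'.1-1 := congrArg Prod.fst heq
            have h2 : 4*p.2-1 = 4*p'.2-1 := congrArg Prod.snd heq
            exact Prod.ext (by omega) (by omega)
        have hrep := rep_bound m hm1'
        have hdm := hCd m hm1'
        have hd0 : (0:ℝ) ≤ (m.divisors.card : ℝ) := Nat.cast_nonneg _
        have step1 : ((B.filter fun p => fm p = m).card : ℝ) ≤ 2*((m.divisors.card : ℝ))^3 := by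
          have : ((B.filter fun p => fm p = m).card : ℝ) ≤ ((2 * m.divisors.card^3 : ℕ) : ℝ) := by
            exact_mod_cast hinj.trans hrep
          push_cast at this
          linarith
        have step2 : ((m.divisors.card : ℝ))^3 ≤ (Cd * (m:ℝ)^δ)^3 :=
          pow_le_pow_left₀ hd0 hdm 3
        have step3 : (Cd * (m:ℝ)^δ)^3 = Cd^3 * ((m:ℝ)^δ)^3 := by ring
        have step4 : ((m:ℝ)^δ)^3 = (m:ℝ)^(3*δ) := by
          rw [← Real.rpow_natCast ((m:ℝ)^δ) 3, ← Real.rpow_mul (Nat.cast_nonneg m)]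
          congr 1
          push_cast
          ring
        have step5 : (m:ℝ)^(3*δ) ≤ (2*W^6)^(3*δ) :=
          Real.rpow_le_rpow (Nat.cast_nonneg m) hcase (by positivity)
        have chain : ((B.filter fun p => fm p = m).card : ℝ) ≤ 2*Cd^3*(2*W^6)^(3*δ) := by
          calc ((B.filter fun p => fm p = m).card : ℝ)
              ≤ 2*((m.divisors.card : ℝ))^3 := step1
            _ ≤ 2*(Cd * (m:ℝ)^δ)^3 := by linarith
            _ = 2*Cd^3*((m:ℝ)^δ)^3 := by ring
            _ = 2*Cd^3*(m:ℝ)^(3*δ) := by rw [step4]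
            _ ≤ 2*Cd^3*(2*W^6)^(3*δ) := by
                apply mul_le_mul_of_nonneg_left step5 (by positivity)
        rw [hQdef]
        linarith
      · -- large m : at most 2 points (lattice points on a circle arc)
        have hcard2 : (B.filter fun p => fm p = m).card ≤ 2 := by
          apply two_points_only W hW0 m hcase
          · intro p hp
            simp only [Finset.mem_filter] at hp
            obtain ⟨hpB, hfmp⟩ := hp
            obtain ⟨hp1, hp2, _⟩ := (hmemB p).mp hpB
            rw [hfmdef] at hfmp
            exact ⟨hp1, hp2, hfmp⟩
          · intro p hp q hq
            simp only [Finset.mem_filter] at hp hq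
            obtain ⟨hp1, hp2, hpz1, hpz2, _⟩ := (hmemB p).mp hp.1
            obtain ⟨hq1, hq2, hqz1, hqz2, _⟩ := (hmemB q).mp hq.1
            exact ⟨hwin p.1 q.1 hp1 hq1 hpz1 hqz1, hwin p.2 q.2 hp2 hq2 hpz2 hqz2⟩
        calc ((B.filter fun p => fm p = m).card : ℝ) ≤ 2 := by exact_mod_cast hcard2
          _ ≤ Q := by
              have h0 : (0:ℝ) ≤ 2*Cd^3*(2*W^6)^(3*δ) := by positivity
              rw [hQdef]
              linarith
    -- put everything together
    have hsum : (B.card : ℝ) ≤ (T.card : ℝ) * Q := by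
      rw [hfibsum]
      push_cast
      calc ∑ m ∈ T, ((B.filter fun p => fm p = m).card : ℝ)
          ≤ ∑ m ∈ T, Q := Finset.sum_le_sum hQfib
        _ = (T.card : ℝ) * Q := by rw [Finset.sum_const, nsmul_eq_mul]
    have hQL : Q ≤ (2 + 2*Cd^3*c₇^(ε/6)) * L^ε := by
      have hexp : 3*δ = ε/6 := by rw [hδdef]; ring
      have hW6 : 2*W^6 = c₇ * L^6 := by rw [hWdef, hc₇def]; ring
      have hrw : (2*W^6)^(3*δ) = c₇^(ε/6) * L^ε := by
        rw [hexp, hW6, Real.mul_rpow (le_of_lt hc₇0) (by positivity)]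
        congr 1
        rw [← Real.rpow_natCast L 6, ← Real.rpow_mul (le_of_lt hL0)]
        congr 1
        push_cast
        ring
      rw [hQdef, hrw]
      have h1 : (2:ℝ) ≤ 2 * L^ε := by linarith
      have h3 : (2 + 2*Cd^3*c₇^(ε/6)) * L^ε = 2*L^ε + 2*Cd^3*(c₇^(ε/6) * L^ε) := by ring
      rw [h3]
      linarith
    calc (B.card : ℝ) ≤ (T.card : ℝ) * Q := hsum
      _ ≤ ((Dn:ℝ) + 1) * Q := by
          apply mul_le_mul_of_nonneg_right _ hQ0
          have : (T.card : ℝ) ≤ ((Dn + 1 : ℕ) : ℝ) := by exact_mod_cast hTcard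
          push_cast at this
          linarith
      _ ≤ ((Dn:ℝ) + 1) * ((2 + 2*Cd^3*c₇^(ε/6)) * L^ε) := by
          apply mul_le_mul_of_nonneg_left hQL (by positivity)
      _ = ((Dn:ℝ) + 1) * (2 + 2*Cd^3*c₇^(ε/6)) * L^ε := by ring
end
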